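/- Let L be the negative definite root lattice of A₁₇ ⊕ 2A₁ with A₁₇ chain e₁,…,e₁₇ and A₁ generators e₁₈, e₁₉, and N = ℤλ ⊕ L with λ² = 2. Let u = λ/2 + (Σ_{i=1}^{17} i·e_i)/2 and v = λ/2 + (Σ_{i=1}^{17} i·e_i)/6. Then both u and v pair integrally with N and have even square; moreover the overlattice N + ℤu has index 2 over N while N + ℤv has index 6 over N, so their discriminant groups have different orders. -/

import Mathlib

open Matrix

/-- Dynkin-diagram edges for A₁₇ ⊕ 2A₁ (index 0 reserved for λ):
A₁₇ chain e₁,…,e₁₇; A₁'s e₁₈, e₁₉. -/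
def adj : List (ℕ × ℕ) :=
  [(1,2),(2,3),(3,4),(4,5),(5,6),(6,7),(7,8),(8,9),(9,10),(10,11),(11,12),
   (12,13),(13,14),(14,15),(15,16),(16,17)]

/-- Gram matrix of N = ℤλ ⊕ L(A₁₇+2A₁): λ² = 2, roots of square −2. -/
def gramN : Matrix (Fin 20) (Fin 20) ℚ := fun i j =>
  if i = j then (if i.val = 0 then 2 else -2)
  else if (i.val, j.val) ∈ adj ∨ (j.val, i.val) ∈ adj then 1 else 0

/-- The bilinear form extended ℚ-bilinearly. -/
def form (x y : Fin 20 → ℚ) : ℚ := x ⬝ᵥ gramN.mulVec y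

/-- The lattice N: integer coordinate vectors. -/
def IntLat : AddSubgroup (Fin 20 → ℚ) where
  carrier := {x | ∀ i, ∃ k : ℤ, x i = (k : ℚ)}
  zero_mem' := fun i => ⟨0, by simp⟩
  add_mem' := by
    intro a b ha hb i
    obtain ⟨p, hp⟩ := ha i; obtain ⟨q, hq⟩ := hb i
    exact ⟨p + q, by simp [hp, hq]⟩
  neg_mem' := by
    intro a ha i
    obtain ⟨p, hp⟩ := ha i
    exact ⟨-p, by simp [hp]⟩

/-- The dual lattice M^∨ of a subgroup M (with respect to `form`). -/
def dualLat (M : AddSubgroup (Fin 20 → ℚ)) : AddSubgroup (Fin 20 → ℚ) where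
  carrier := {x | ∀ y ∈ M, ∃ k : ℤ, form x y = (k : ℚ)}
  zero_mem' := by
    intro y hy
    exact ⟨0, by simp [form]⟩
  add_mem' := by
    intro a b ha hb y hy
    obtain ⟨p, hp⟩ := ha y hy; obtain ⟨q, hq⟩ := hb y hy
    refine ⟨p + q, ?_⟩
    have h : form (a + b) y = form a y + form b y := by simp [form, add_dotProduct]
    rw [h, hp, hq]; push_cast; ring
  neg_mem' := by
    intro a ha y hy
    obtain ⟨p, hp⟩ := ha y hy
    refine ⟨-p, ?_⟩
    have h : form (-a) y = -form a y := by simp [form, neg_dotProduct]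
    rw [h, hp]; push_cast; ring

/-- The discriminant group M^∨/M. -/
abbrev disc (M : AddSubgroup (Fin 20 → ℚ)) :=
  dualLat M ⧸ M.addSubgroupOf (dualLat M)

/-- u = λ/2 + (Σ_{i=1}^{17} i·e_i)/2. -/
def u : Fin 20 → ℚ := fun j =>
  if j.val = 0 then 1/2 else if j.val ≤ 17 then (j.val : ℚ) / 2 else 0

/-- v = λ/2 + (Σ_{i=1}^{17} i·e_i)/6. -/
def v : Fin 20 → ℚ := fun j =>
  if j.val = 0 then 1/2 else if j.val ≤ 17 then (j.val : ℚ) / 6 else 0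

/-- M_u = N + ℤu. -/
def Mu : AddSubgroup (Fin 20 → ℚ) := IntLat ⊔ AddSubgroup.zmultiples u

/-- M_v = N + ℤv. -/
def Mv : AddSubgroup (Fin 20 → ℚ) := IntLat ⊔ AddSubgroup.zmultiples v



private lemma fs_2_3 : Fin.succ (2 : Fin 3) = (3 : Fin 4) := by decide
private lemma fs_2_4 : Fin.succ (2 : Fin 4) = (3 : Fin 5) := by decide
private lemma fs_2_5 : Fin.succ (2 : Fin 5) = (3 : Fin 6) := by decide
private lemma fs_2_6 : Fin.succ (2 : Fin 6) = (3 : Fin 7) := by decide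
private lemma fs_2_7 : Fin.succ (2 : Fin 7) = (3 : Fin 8) := by decide
private lemma fs_2_8 : Fin.succ (2 : Fin 8) = (3 : Fin 9) := by decide
private lemma fs_2_9 : Fin.succ (2 : Fin 9) = (3 : Fin 10) := by decide
private lemma fs_2_10 : Fin.succ (2 : Fin 10) = (3 : Fin 11) := by decide
private lemma fs_2_11 : Fin.succ (2 : Fin 11) = (3 : Fin 12) := by decide
private lemma fs_2_12 : Fin.succ (2 : Fin 12) = (3 : Fin 13) := by decide
private lemma fs_2_13 : Fin.succ (2 : Fin 13) = (3 : Fin 14) := by decide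
private lemma fs_2_14 : Fin.succ (2 : Fin 14) = (3 : Fin 15) := by decide
private lemma fs_2_15 : Fin.succ (2 : Fin 15) = (3 : Fin 16) := by decide
private lemma fs_2_16 : Fin.succ (2 : Fin 16) = (3 : Fin 17) := by decide
private lemma fs_2_17 : Fin.succ (2 : Fin 17) = (3 : Fin 18) := by decide
private lemma fs_2_18 : Fin.succ (2 : Fin 18) = (3 : Fin 19) := by decide
private lemma fs_2_19 : Fin.succ (2 : Fin 19) = (3 : Fin 20) := by decide
private lemma fs_3_4 : Fin.succ (3 : Fin 4) = (4 : Fin 5) := by decide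
private lemma fs_3_5 : Fin.succ (3 : Fin 5) = (4 : Fin 6) := by decide
private lemma fs_3_6 : Fin.succ (3 : Fin 6) = (4 : Fin 7) := by decide
private lemma fs_3_7 : Fin.succ (3 : Fin 7) = (4 : Fin 8) := by decide
private lemma fs_3_8 : Fin.succ (3 : Fin 8) = (4 : Fin 9) := by decide
private lemma fs_3_9 : Fin.succ (3 : Fin 9) = (4 : Fin 10) := by decide
private lemma fs_3_10 : Fin.succ (3 : Fin 10) = (4 : Fin 11) := by decide
private lemma fs_3_11 : Fin.succ (3 : Fin 11) = (4 : Fin 12) := by decide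
private lemma fs_3_12 : Fin.succ (3 : Fin 12) = (4 : Fin 13) := by decide
private lemma fs_3_13 : Fin.succ (3 : Fin 13) = (4 : Fin 14) := by decide
private lemma fs_3_14 : Fin.succ (3 : Fin 14) = (4 : Fin 15) := by decide
private lemma fs_3_15 : Fin.succ (3 : Fin 15) = (4 : Fin 16) := by decide
private lemma fs_3_16 : Fin.succ (3 : Fin 16) = (4 : Fin 17) := by decide
private lemma fs_3_17 : Fin.succ (3 : Fin 17) = (4 : Fin 18) := by decide
private lemma fs_3_18 : Fin.succ (3 : Fin 18) = (4 : Fin 19) := by decide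
private lemma fs_3_19 : Fin.succ (3 : Fin 19) = (4 : Fin 20) := by decide
private lemma fs_4_5 : Fin.succ (4 : Fin 5) = (5 : Fin 6) := by decide
private lemma fs_4_6 : Fin.succ (4 : Fin 6) = (5 : Fin 7) := by decide
private lemma fs_4_7 : Fin.succ (4 : Fin 7) = (5 : Fin 8) := by decide
private lemma fs_4_8 : Fin.succ (4 : Fin 8) = (5 : Fin 9) := by decide
private lemma fs_4_9 : Fin.succ (4 : Fin 9) = (5 : Fin 10) := by decide
private lemma fs_4_10 : Fin.succ (4 : Fin 10) = (5 : Fin 11) := by decide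
private lemma fs_4_11 : Fin.succ (4 : Fin 11) = (5 : Fin 12) := by decide
private lemma fs_4_12 : Fin.succ (4 : Fin 12) = (5 : Fin 13) := by decide
private lemma fs_4_13 : Fin.succ (4 : Fin 13) = (5 : Fin 14) := by decide
private lemma fs_4_14 : Fin.succ (4 : Fin 14) = (5 : Fin 15) := by decide
private lemma fs_4_15 : Fin.succ (4 : Fin 15) = (5 : Fin 16) := by decide
private lemma fs_4_16 : Fin.succ (4 : Fin 16) = (5 : Fin 17) := by decide
private lemma fs_4_17 : Fin.succ (4 : Fin 17) = (5 : Fin 18) := by decide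
private lemma fs_4_18 : Fin.succ (4 : Fin 18) = (5 : Fin 19) := by decide
private lemma fs_4_19 : Fin.succ (4 : Fin 19) = (5 : Fin 20) := by decide
private lemma fs_5_6 : Fin.succ (5 : Fin 6) = (6 : Fin 7) := by decide
private lemma fs_5_7 : Fin.succ (5 : Fin 7) = (6 : Fin 8) := by decide
private lemma fs_5_8 : Fin.succ (5 : Fin 8) = (6 : Fin 9) := by decide
private lemma fs_5_9 : Fin.succ (5 : Fin 9) = (6 : Fin 10) := by decide
private lemma fs_5_10 : Fin.succ (5 : Fin 10) = (6 : Fin 11) := by decide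
private lemma fs_5_11 : Fin.succ (5 : Fin 11) = (6 : Fin 12) := by decide
private lemma fs_5_12 : Fin.succ (5 : Fin 12) = (6 : Fin 13) := by decide
private lemma fs_5_13 : Fin.succ (5 : Fin 13) = (6 : Fin 14) := by decide
private lemma fs_5_14 : Fin.succ (5 : Fin 14) = (6 : Fin 15) := by decide
private lemma fs_5_15 : Fin.succ (5 : Fin 15) = (6 : Fin 16) := by decide
private lemma fs_5_16 : Fin.succ (5 : Fin 16) = (6 : Fin 17) := by decide
private lemma fs_5_17 : Fin.succ (5 : Fin 17) = (6 : Fin 18) := by decide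
private lemma fs_5_18 : Fin.succ (5 : Fin 18) = (6 : Fin 19) := by decide
private lemma fs_5_19 : Fin.succ (5 : Fin 19) = (6 : Fin 20) := by decide
private lemma fs_6_7 : Fin.succ (6 : Fin 7) = (7 : Fin 8) := by decide
private lemma fs_6_8 : Fin.succ (6 : Fin 8) = (7 : Fin 9) := by decide
private lemma fs_6_9 : Fin.succ (6 : Fin 9) = (7 : Fin 10) := by decide
private lemma fs_6_10 : Fin.succ (6 : Fin 10) = (7 : Fin 11) := by decide
private lemma fs_6_11 : Fin.succ (6 : Fin 11) = (7 : Fin 12) := by decide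
private lemma fs_6_12 : Fin.succ (6 : Fin 12) = (7 : Fin 13) := by decide
private lemma fs_6_13 : Fin.succ (6 : Fin 13) = (7 : Fin 14) := by decide
private lemma fs_6_14 : Fin.succ (6 : Fin 14) = (7 : Fin 15) := by decide
private lemma fs_6_15 : Fin.succ (6 : Fin 15) = (7 : Fin 16) := by decide
private lemma fs_6_16 : Fin.succ (6 : Fin 16) = (7 : Fin 17) := by decide
private lemma fs_6_17 : Fin.succ (6 : Fin 17) = (7 : Fin 18) := by decide
private lemma fs_6_18 : Fin.succ (6 : Fin 18) = (7 : Fin 19) := by decide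
private lemma fs_6_19 : Fin.succ (6 : Fin 19) = (7 : Fin 20) := by decide
private lemma fs_7_8 : Fin.succ (7 : Fin 8) = (8 : Fin 9) := by decide
private lemma fs_7_9 : Fin.succ (7 : Fin 9) = (8 : Fin 10) := by decide
private lemma fs_7_10 : Fin.succ (7 : Fin 10) = (8 : Fin 11) := by decide
private lemma fs_7_11 : Fin.succ (7 : Fin 11) = (8 : Fin 12) := by decide
private lemma fs_7_12 : Fin.succ (7 : Fin 12) = (8 : Fin 13) := by decide
private lemma fs_7_13 : Fin.succ (7 : Fin 13) = (8 : Fin 14) := by decide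
private lemma fs_7_14 : Fin.succ (7 : Fin 14) = (8 : Fin 15) := by decide
private lemma fs_7_15 : Fin.succ (7 : Fin 15) = (8 : Fin 16) := by decide
private lemma fs_7_16 : Fin.succ (7 : Fin 16) = (8 : Fin 17) := by decide
private lemma fs_7_17 : Fin.succ (7 : Fin 17) = (8 : Fin 18) := by decide
private lemma fs_7_18 : Fin.succ (7 : Fin 18) = (8 : Fin 19) := by decide
private lemma fs_7_19 : Fin.succ (7 : Fin 19) = (8 : Fin 20) := by decide
private lemma fs_8_9 : Fin.succ (8 : Fin 9) = (9 : Fin 10) := by decide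
private lemma fs_8_10 : Fin.succ (8 : Fin 10) = (9 : Fin 11) := by decide
private lemma fs_8_11 : Fin.succ (8 : Fin 11) = (9 : Fin 12) := by decide
private lemma fs_8_12 : Fin.succ (8 : Fin 12) = (9 : Fin 13) := by decide
private lemma fs_8_13 : Fin.succ (8 : Fin 13) = (9 : Fin 14) := by decide
private lemma fs_8_14 : Fin.succ (8 : Fin 14) = (9 : Fin 15) := by decide
private lemma fs_8_15 : Fin.succ (8 : Fin 15) = (9 : Fin 16) := by decide
private lemma fs_8_16 : Fin.succ (8 : Fin 16) = (9 : Fin 17) := by decide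
private lemma fs_8_17 : Fin.succ (8 : Fin 17) = (9 : Fin 18) := by decide
private lemma fs_8_18 : Fin.succ (8 : Fin 18) = (9 : Fin 19) := by decide
private lemma fs_8_19 : Fin.succ (8 : Fin 19) = (9 : Fin 20) := by decide
private lemma fs_9_10 : Fin.succ (9 : Fin 10) = (10 : Fin 11) := by decide
private lemma fs_9_11 : Fin.succ (9 : Fin 11) = (10 : Fin 12) := by decide
private lemma fs_9_12 : Fin.succ (9 : Fin 12) = (10 : Fin 13) := by decide
private lemma fs_9_13 : Fin.succ (9 : Fin 13) = (10 : Fin 14) := by decide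
private lemma fs_9_14 : Fin.succ (9 : Fin 14) = (10 : Fin 15) := by decide
private lemma fs_9_15 : Fin.succ (9 : Fin 15) = (10 : Fin 16) := by decide
private lemma fs_9_16 : Fin.succ (9 : Fin 16) = (10 : Fin 17) := by decide
private lemma fs_9_17 : Fin.succ (9 : Fin 17) = (10 : Fin 18) := by decide
private lemma fs_9_18 : Fin.succ (9 : Fin 18) = (10 : Fin 19) := by decide
private lemma fs_9_19 : Fin.succ (9 : Fin 19) = (10 : Fin 20) := by decide
private lemma fs_10_11 : Fin.succ (10 : Fin 11) = (11 : Fin 12) := by decide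
private lemma fs_10_12 : Fin.succ (10 : Fin 12) = (11 : Fin 13) := by decide
private lemma fs_10_13 : Fin.succ (10 : Fin 13) = (11 : Fin 14) := by decide
private lemma fs_10_14 : Fin.succ (10 : Fin 14) = (11 : Fin 15) := by decide
private lemma fs_10_15 : Fin.succ (10 : Fin 15) = (11 : Fin 16) := by decide
private lemma fs_10_16 : Fin.succ (10 : Fin 16) = (11 : Fin 17) := by decide
private lemma fs_10_17 : Fin.succ (10 : Fin 17) = (11 : Fin 18) := by decide
private lemma fs_10_18 : Fin.succ (10 : Fin 18) = (11 : Fin 19) := by decide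
private lemma fs_10_19 : Fin.succ (10 : Fin 19) = (11 : Fin 20) := by decide
private lemma fs_11_12 : Fin.succ (11 : Fin 12) = (12 : Fin 13) := by decide
private lemma fs_11_13 : Fin.succ (11 : Fin 13) = (12 : Fin 14) := by decide
private lemma fs_11_14 : Fin.succ (11 : Fin 14) = (12 : Fin 15) := by decide
private lemma fs_11_15 : Fin.succ (11 : Fin 15) = (12 : Fin 16) := by decide
private lemma fs_11_16 : Fin.succ (11 : Fin 16) = (12 : Fin 17) := by decide
private lemma fs_11_17 : Fin.succ (11 : Fin 17) = (12 : Fin 18) := by decide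
private lemma fs_11_18 : Fin.succ (11 : Fin 18) = (12 : Fin 19) := by decide
private lemma fs_11_19 : Fin.succ (11 : Fin 19) = (12 : Fin 20) := by decide
private lemma fs_12_13 : Fin.succ (12 : Fin 13) = (13 : Fin 14) := by decide
private lemma fs_12_14 : Fin.succ (12 : Fin 14) = (13 : Fin 15) := by decide
private lemma fs_12_15 : Fin.succ (12 : Fin 15) = (13 : Fin 16) := by decide
private lemma fs_12_16 : Fin.succ (12 : Fin 16) = (13 : Fin 17) := by decide
private lemma fs_12_17 : Fin.succ (12 : Fin 17) = (13 : Fin 18) := by decide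
private lemma fs_12_18 : Fin.succ (12 : Fin 18) = (13 : Fin 19) := by decide
private lemma fs_12_19 : Fin.succ (12 : Fin 19) = (13 : Fin 20) := by decide
private lemma fs_13_14 : Fin.succ (13 : Fin 14) = (14 : Fin 15) := by decide
private lemma fs_13_15 : Fin.succ (13 : Fin 15) = (14 : Fin 16) := by decide
private lemma fs_13_16 : Fin.succ (13 : Fin 16) = (14 : Fin 17) := by decide
private lemma fs_13_17 : Fin.succ (13 : Fin 17) = (14 : Fin 18) := by decide
private lemma fs_13_18 : Fin.succ (13 : Fin 18) = (14 : Fin 19) := by decide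
private lemma fs_13_19 : Fin.succ (13 : Fin 19) = (14 : Fin 20) := by decide
private lemma fs_14_15 : Fin.succ (14 : Fin 15) = (15 : Fin 16) := by decide
private lemma fs_14_16 : Fin.succ (14 : Fin 16) = (15 : Fin 17) := by decide
private lemma fs_14_17 : Fin.succ (14 : Fin 17) = (15 : Fin 18) := by decide
private lemma fs_14_18 : Fin.succ (14 : Fin 18) = (15 : Fin 19) := by decide
private lemma fs_14_19 : Fin.succ (14 : Fin 19) = (15 : Fin 20) := by decide
private lemma fs_15_16 : Fin.succ (15 : Fin 16) = (16 : Fin 17) := by decide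
private lemma fs_15_17 : Fin.succ (15 : Fin 17) = (16 : Fin 18) := by decide
private lemma fs_15_18 : Fin.succ (15 : Fin 18) = (16 : Fin 19) := by decide
private lemma fs_15_19 : Fin.succ (15 : Fin 19) = (16 : Fin 20) := by decide
private lemma fs_16_17 : Fin.succ (16 : Fin 17) = (17 : Fin 18) := by decide
private lemma fs_16_18 : Fin.succ (16 : Fin 18) = (17 : Fin 19) := by decide
private lemma fs_16_19 : Fin.succ (16 : Fin 19) = (17 : Fin 20) := by decide
private lemma fs_17_18 : Fin.succ (17 : Fin 18) = (18 : Fin 19) := by decide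
private lemma fs_17_19 : Fin.succ (17 : Fin 19) = (18 : Fin 20) := by decide
private lemma fs_18_19 : Fin.succ (18 : Fin 19) = (19 : Fin 20) := by decide

private lemma fmk_0 (h : (0:ℕ) < 20) : (⟨0, h⟩ : Fin 20) = (0 : Fin 20) := rfl
private lemma fmk_1 (h : (1:ℕ) < 20) : (⟨1, h⟩ : Fin 20) = (1 : Fin 20) := rfl
private lemma fmk_2 (h : (2:ℕ) < 20) : (⟨2, h⟩ : Fin 20) = (2 : Fin 20) := rfl
private lemma fmk_3 (h : (3:ℕ) < 20) : (⟨3, h⟩ : Fin 20) = (3 : Fin 20) := rfl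
private lemma fmk_4 (h : (4:ℕ) < 20) : (⟨4, h⟩ : Fin 20) = (4 : Fin 20) := rfl
private lemma fmk_5 (h : (5:ℕ) < 20) : (⟨5, h⟩ : Fin 20) = (5 : Fin 20) := rfl
private lemma fmk_6 (h : (6:ℕ) < 20) : (⟨6, h⟩ : Fin 20) = (6 : Fin 20) := rfl
private lemma fmk_7 (h : (7:ℕ) < 20) : (⟨7, h⟩ : Fin 20) = (7 : Fin 20) := rfl
private lemma fmk_8 (h : (8:ℕ) < 20) : (⟨8, h⟩ : Fin 20) = (8 : Fin 20) := rfl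
private lemma fmk_9 (h : (9:ℕ) < 20) : (⟨9, h⟩ : Fin 20) = (9 : Fin 20) := rfl
private lemma fmk_10 (h : (10:ℕ) < 20) : (⟨10, h⟩ : Fin 20) = (10 : Fin 20) := rfl
private lemma fmk_11 (h : (11:ℕ) < 20) : (⟨11, h⟩ : Fin 20) = (11 : Fin 20) := rfl
private lemma fmk_12 (h : (12:ℕ) < 20) : (⟨12, h⟩ : Fin 20) = (12 : Fin 20) := rfl
private lemma fmk_13 (h : (13:ℕ) < 20) : (⟨13, h⟩ : Fin 20) = (13 : Fin 20) := rfl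
private lemma fmk_14 (h : (14:ℕ) < 20) : (⟨14, h⟩ : Fin 20) = (14 : Fin 20) := rfl
private lemma fmk_15 (h : (15:ℕ) < 20) : (⟨15, h⟩ : Fin 20) = (15 : Fin 20) := rfl
private lemma fmk_16 (h : (16:ℕ) < 20) : (⟨16, h⟩ : Fin 20) = (16 : Fin 20) := rfl
private lemma fmk_17 (h : (17:ℕ) < 20) : (⟨17, h⟩ : Fin 20) = (17 : Fin 20) := rfl
private lemma fmk_18 (h : (18:ℕ) < 20) : (⟨18, h⟩ : Fin 20) = (18 : Fin 20) := rfl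
private lemma fmk_19 (h : (19:ℕ) < 20) : (⟨19, h⟩ : Fin 20) = (19 : Fin 20) := rfl

private lemma fv_0 : ((0 : Fin 20) : ℕ) = 0 := rfl
private lemma fv_1 : ((1 : Fin 20) : ℕ) = 1 := rfl
private lemma fv_2 : ((2 : Fin 20) : ℕ) = 2 := rfl
private lemma fv_3 : ((3 : Fin 20) : ℕ) = 3 := rfl
private lemma fv_4 : ((4 : Fin 20) : ℕ) = 4 := rfl
private lemma fv_5 : ((5 : Fin 20) : ℕ) = 5 := rfl
private lemma fv_6 : ((6 : Fin 20) : ℕ) = 6 := rfl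
private lemma fv_7 : ((7 : Fin 20) : ℕ) = 7 := rfl
private lemma fv_8 : ((8 : Fin 20) : ℕ) = 8 := rfl
private lemma fv_9 : ((9 : Fin 20) : ℕ) = 9 := rfl
private lemma fv_10 : ((10 : Fin 20) : ℕ) = 10 := rfl
private lemma fv_11 : ((11 : Fin 20) : ℕ) = 11 := rfl
private lemma fv_12 : ((12 : Fin 20) : ℕ) = 12 := rfl
private lemma fv_13 : ((13 : Fin 20) : ℕ) = 13 := rfl
private lemma fv_14 : ((14 : Fin 20) : ℕ) = 14 := rfl
private lemma fv_15 : ((15 : Fin 20) : ℕ) = 15 := rfl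
private lemma fv_16 : ((16 : Fin 20) : ℕ) = 16 := rfl
private lemma fv_17 : ((17 : Fin 20) : ℕ) = 17 := rfl
private lemma fv_18 : ((18 : Fin 20) : ℕ) = 18 := rfl
private lemma fv_19 : ((19 : Fin 20) : ℕ) = 19 := rfl

private lemma dot20 (x w : Fin 20 → ℚ) : x ⬝ᵥ w =
    x 0 * w 0 + x 1 * w 1 + x 2 * w 2 + x 3 * w 3 + x 4 * w 4 + x 5 * w 5 + x 6 * w 6 +
    x 7 * w 7 + x 8 * w 8 + x 9 * w 9 + x 10 * w 10 + x 11 * w 11 + x 12 * w 12 + x 13 * w 13 +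
    x 14 * w 14 + x 15 * w 15 + x 16 * w 16 + x 17 * w 17 + x 18 * w 18 + x 19 * w 19 := by
  simp only [dotProduct, Fin.sum_univ_succ, Fin.sum_univ_one, Fin.succ_zero_eq_one,
    Fin.succ_one_eq_two, fs_2_3, fs_2_4, fs_2_5, fs_2_6, fs_2_7, fs_2_8, fs_2_9, fs_2_10, fs_2_11, fs_2_12, fs_2_13, fs_2_14, fs_2_15, fs_2_16, fs_2_17, fs_2_18, fs_2_19, fs_3_4, fs_3_5, fs_3_6, fs_3_7, fs_3_8, fs_3_9, fs_3_10, fs_3_11, fs_3_12, fs_3_13, fs_3_14, fs_3_15, fs_3_16, fs_3_17, fs_3_18, fs_3_19, fs_4_5, fs_4_6, fs_4_7, fs_4_8, fs_4_9, fs_4_10, fs_4_11, fs_4_12, fs_4_13, fs_4_14, fs_4_15, fs_4_16, fs_4_17, fs_4_18, fs_4_19, fs_5_6, fs_5_7, fs_5_8, fs_5_9, fs_5_10, fs_5_11, fs_5_12, fs_5_13, fs_5_14, fs_5_15, fs_5_16, fs_5_17, fs_5_18, fs_5_19, fs_6_7, fs_6_8, fs_6_9, fs_6_10, fs_6_11,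 fs_6_12, fs_6_13, fs_6_14, fs_6_15, fs_6_16, fs_6_17, fs_6_18, fs_6_19, fs_7_8, fs_7_9, fs_7_10, fs_7_11, fs_7_12, fs_7_13, fs_7_14, fs_7_15, fs_7_16, fs_7_17, fs_7_18, fs_7_19, fs_8_9, fs_8_10, fs_8_11, fs_8_12, fs_8_13, fs_8_14, fs_8_15, fs_8_16, fs_8_17, fs_8_18, fs_8_19, fs_9_10, fs_9_11, fs_9_12, fs_9_13, fs_9_14, fs_9_15, fs_9_16, fs_9_17, fs_9_18, fs_9_19, fs_10_11, fs_10_12, fs_10_13, fs_10_14, fs_10_15, fs_10_16, fs_10_17, fs_10_18, fs_10_19, fs_11_12, fs_11_13, fs_11_14, fs_11_15, fs_11_16, fs_11_17, fs_11_18, fs_11_19, fs_12_13, fs_12_14, fs_12_15, fs_12_16, fs_12_17, fs_12_18, fs_12_19, fs_13_14, fs_13_15, fs_13_16, fs_13_17, fs_13_18, fs_13_19, fs_14_15, fs_14_16, fs_14_17, fs_14_18, fs_14_19, fs_15_16, fs_15_17, fs_15_18, fs_15_19, fs_16_17, fs_16_18, fs_16_19, fs_17_18, fs_17_19, fs_1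8_19]
  ring

/-- s/3 where s = Σ i·e_i. -/
def s3 : Fin 20 → ℚ := fun j =>
  if j.val = 0 then 0 else if j.val ≤ 17 then (j.val : ℚ) / 3 else 0

private lemma g_0_0 : gramN 0 0 = 2 := rfl
private lemma g_1_0 : gramN 1 0 = 0 := rfl
private lemma g_2_0 : gramN 2 0 = 0 := rfl
private lemma g_3_0 : gramN 3 0 = 0 := rfl
private lemma g_4_0 : gramN 4 0 = 0 := rfl
private lemma g_5_0 : gramN 5 0 = 0 := rfl
private lemma g_6_0 : gramN 6 0 = 0 := rfl
private lemma g_7_0 : gramN 7 0 = 0 := rfl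
private lemma g_8_0 : gramN 8 0 = 0 := rfl
private lemma g_9_0 : gramN 9 0 = 0 := rfl
private lemma g_10_0 : gramN 10 0 = 0 := rfl
private lemma g_11_0 : gramN 11 0 = 0 := rfl
private lemma g_12_0 : gramN 12 0 = 0 := rfl
private lemma g_13_0 : gramN 13 0 = 0 := rfl
private lemma g_14_0 : gramN 14 0 = 0 := rfl
private lemma g_15_0 : gramN 15 0 = 0 := rfl
private lemma g_16_0 : gramN 16 0 = 0 := rfl
private lemma g_17_0 : gramN 17 0 = 0 := rfl
private lemma g_18_0 : gramN 18 0 = 0 := rfl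
private lemma g_19_0 : gramN 19 0 = 0 := rfl
private lemma g_0_1 : gramN 0 1 = 0 := rfl
private lemma g_1_1 : gramN 1 1 = -2 := rfl
private lemma g_2_1 : gramN 2 1 = 1 := rfl
private lemma g_3_1 : gramN 3 1 = 0 := rfl
private lemma g_4_1 : gramN 4 1 = 0 := rfl
private lemma g_5_1 : gramN 5 1 = 0 := rfl
private lemma g_6_1 : gramN 6 1 = 0 := rfl
private lemma g_7_1 : gramN 7 1 = 0 := rfl
private lemma g_8_1 : gramN 8 1 = 0 := rfl
private lemma g_9_1 : gramN 9 1 = 0 := rfl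
private lemma g_10_1 : gramN 10 1 = 0 := rfl
private lemma g_11_1 : gramN 11 1 = 0 := rfl
private lemma g_12_1 : gramN 12 1 = 0 := rfl
private lemma g_13_1 : gramN 13 1 = 0 := rfl
private lemma g_14_1 : gramN 14 1 = 0 := rfl
private lemma g_15_1 : gramN 15 1 = 0 := rfl
private lemma g_16_1 : gramN 16 1 = 0 := rfl
private lemma g_17_1 : gramN 17 1 = 0 := rfl
private lemma g_18_1 : gramN 18 1 = 0 := rfl
private lemma g_19_1 : gramN 19 1 = 0 := rfl
private lemma g_0_2 : gramN 0 2 = 0 := rfl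
private lemma g_1_2 : gramN 1 2 = 1 := rfl
private lemma g_2_2 : gramN 2 2 = -2 := rfl
private lemma g_3_2 : gramN 3 2 = 1 := rfl
private lemma g_4_2 : gramN 4 2 = 0 := rfl
private lemma g_5_2 : gramN 5 2 = 0 := rfl
private lemma g_6_2 : gramN 6 2 = 0 := rfl
private lemma g_7_2 : gramN 7 2 = 0 := rfl
private lemma g_8_2 : gramN 8 2 = 0 := rfl
private lemma g_9_2 : gramN 9 2 = 0 := rfl
private lemma g_10_2 : gramN 10 2 = 0 := rfl
private lemma g_11_2 : gramN 11 2 = 0 := rfl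
private lemma g_12_2 : gramN 12 2 = 0 := rfl
private lemma g_13_2 : gramN 13 2 = 0 := rfl
private lemma g_14_2 : gramN 14 2 = 0 := rfl
private lemma g_15_2 : gramN 15 2 = 0 := rfl
private lemma g_16_2 : gramN 16 2 = 0 := rfl
private lemma g_17_2 : gramN 17 2 = 0 := rfl
private lemma g_18_2 : gramN 18 2 = 0 := rfl
private lemma g_19_2 : gramN 19 2 = 0 := rfl
private lemma g_0_3 : gramN 0 3 = 0 := rfl
private lemma g_1_3 : gramN 1 3 = 0 := rfl
private lemma g_2_3 : gramN 2 3 = 1 := rfl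
private lemma g_3_3 : gramN 3 3 = -2 := rfl
private lemma g_4_3 : gramN 4 3 = 1 := rfl
private lemma g_5_3 : gramN 5 3 = 0 := rfl
private lemma g_6_3 : gramN 6 3 = 0 := rfl
private lemma g_7_3 : gramN 7 3 = 0 := rfl
private lemma g_8_3 : gramN 8 3 = 0 := rfl
private lemma g_9_3 : gramN 9 3 = 0 := rfl
private lemma g_10_3 : gramN 10 3 = 0 := rfl
private lemma g_11_3 : gramN 11 3 = 0 := rfl
private lemma g_12_3 : gramN 12 3 = 0 := rfl
private lemma g_13_3 : gramN 13 3 = 0 := rfl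
private lemma g_14_3 : gramN 14 3 = 0 := rfl
private lemma g_15_3 : gramN 15 3 = 0 := rfl
private lemma g_16_3 : gramN 16 3 = 0 := rfl
private lemma g_17_3 : gramN 17 3 = 0 := rfl
private lemma g_18_3 : gramN 18 3 = 0 := rfl
private lemma g_19_3 : gramN 19 3 = 0 := rfl
private lemma g_0_4 : gramN 0 4 = 0 := rfl
private lemma g_1_4 : gramN 1 4 = 0 := rfl
private lemma g_2_4 : gramN 2 4 = 0 := rfl
private lemma g_3_4 : gramN 3 4 = 1 := rfl
private lemma g_4_4 : gramN 4 4 = -2 := rfl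
private lemma g_5_4 : gramN 5 4 = 1 := rfl
private lemma g_6_4 : gramN 6 4 = 0 := rfl
private lemma g_7_4 : gramN 7 4 = 0 := rfl
private lemma g_8_4 : gramN 8 4 = 0 := rfl
private lemma g_9_4 : gramN 9 4 = 0 := rfl
private lemma g_10_4 : gramN 10 4 = 0 := rfl
private lemma g_11_4 : gramN 11 4 = 0 := rfl
private lemma g_12_4 : gramN 12 4 = 0 := rfl
private lemma g_13_4 : gramN 13 4 = 0 := rfl
private lemma g_14_4 : gramN 14 4 = 0 := rfl
private lemma g_15_4 : gramN 15 4 = 0 := rfl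
private lemma g_16_4 : gramN 16 4 = 0 := rfl
private lemma g_17_4 : gramN 17 4 = 0 := rfl
private lemma g_18_4 : gramN 18 4 = 0 := rfl
private lemma g_19_4 : gramN 19 4 = 0 := rfl
private lemma g_0_5 : gramN 0 5 = 0 := rfl
private lemma g_1_5 : gramN 1 5 = 0 := rfl
private lemma g_2_5 : gramN 2 5 = 0 := rfl
private lemma g_3_5 : gramN 3 5 = 0 := rfl
private lemma g_4_5 : gramN 4 5 = 1 := rfl
private lemma g_5_5 : gramN 5 5 = -2 := rfl
private lemma g_6_5 : gramN 6 5 = 1 := rfl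
private lemma g_7_5 : gramN 7 5 = 0 := rfl
private lemma g_8_5 : gramN 8 5 = 0 := rfl
private lemma g_9_5 : gramN 9 5 = 0 := rfl
private lemma g_10_5 : gramN 10 5 = 0 := rfl
private lemma g_11_5 : gramN 11 5 = 0 := rfl
private lemma g_12_5 : gramN 12 5 = 0 := rfl
private lemma g_13_5 : gramN 13 5 = 0 := rfl
private lemma g_14_5 : gramN 14 5 = 0 := rfl
private lemma g_15_5 : gramN 15 5 = 0 := rfl
private lemma g_16_5 : gramN 16 5 = 0 := rfl
private lemma g_17_5 : gramN 17 5 = 0 := rfl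
private lemma g_18_5 : gramN 18 5 = 0 := rfl
private lemma g_19_5 : gramN 19 5 = 0 := rfl
private lemma g_0_6 : gramN 0 6 = 0 := rfl
private lemma g_1_6 : gramN 1 6 = 0 := rfl
private lemma g_2_6 : gramN 2 6 = 0 := rfl
private lemma g_3_6 : gramN 3 6 = 0 := rfl
private lemma g_4_6 : gramN 4 6 = 0 := rfl
private lemma g_5_6 : gramN 5 6 = 1 := rfl
private lemma g_6_6 : gramN 6 6 = -2 := rfl
private lemma g_7_6 : gramN 7 6 = 1 := rfl
private lemma g_8_6 : gramN 8 6 = 0 := rfl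
private lemma g_9_6 : gramN 9 6 = 0 := rfl
private lemma g_10_6 : gramN 10 6 = 0 := rfl
private lemma g_11_6 : gramN 11 6 = 0 := rfl
private lemma g_12_6 : gramN 12 6 = 0 := rfl
private lemma g_13_6 : gramN 13 6 = 0 := rfl
private lemma g_14_6 : gramN 14 6 = 0 := rfl
private lemma g_15_6 : gramN 15 6 = 0 := rfl
private lemma g_16_6 : gramN 16 6 = 0 := rfl
private lemma g_17_6 : gramN 17 6 = 0 := rfl
private lemma g_18_6 : gramN 18 6 = 0 := rfl
private lemma g_19_6 : gramN 19 6 = 0 := rfl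
private lemma g_0_7 : gramN 0 7 = 0 := rfl
private lemma g_1_7 : gramN 1 7 = 0 := rfl
private lemma g_2_7 : gramN 2 7 = 0 := rfl
private lemma g_3_7 : gramN 3 7 = 0 := rfl
private lemma g_4_7 : gramN 4 7 = 0 := rfl
private lemma g_5_7 : gramN 5 7 = 0 := rfl
private lemma g_6_7 : gramN 6 7 = 1 := rfl
private lemma g_7_7 : gramN 7 7 = -2 := rfl
private lemma g_8_7 : gramN 8 7 = 1 := rfl
private lemma g_9_7 : gramN 9 7 = 0 := rfl
private lemma g_10_7 : gramN 10 7 = 0 := rfl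
private lemma g_11_7 : gramN 11 7 = 0 := rfl
private lemma g_12_7 : gramN 12 7 = 0 := rfl
private lemma g_13_7 : gramN 13 7 = 0 := rfl
private lemma g_14_7 : gramN 14 7 = 0 := rfl
private lemma g_15_7 : gramN 15 7 = 0 := rfl
private lemma g_16_7 : gramN 16 7 = 0 := rfl
private lemma g_17_7 : gramN 17 7 = 0 := rfl
private lemma g_18_7 : gramN 18 7 = 0 := rfl
private lemma g_19_7 : gramN 19 7 = 0 := rfl
private lemma g_0_8 : gramN 0 8 = 0 := rfl
private lemma g_1_8 : gramN 1 8 = 0 := rfl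
private lemma g_2_8 : gramN 2 8 = 0 := rfl
private lemma g_3_8 : gramN 3 8 = 0 := rfl
private lemma g_4_8 : gramN 4 8 = 0 := rfl
private lemma g_5_8 : gramN 5 8 = 0 := rfl
private lemma g_6_8 : gramN 6 8 = 0 := rfl
private lemma g_7_8 : gramN 7 8 = 1 := rfl
private lemma g_8_8 : gramN 8 8 = -2 := rfl
private lemma g_9_8 : gramN 9 8 = 1 := rfl
private lemma g_10_8 : gramN 10 8 = 0 := rfl
private lemma g_11_8 : gramN 11 8 = 0 := rfl
private lemma g_12_8 : gramN 12 8 = 0 := rfl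
private lemma g_13_8 : gramN 13 8 = 0 := rfl
private lemma g_14_8 : gramN 14 8 = 0 := rfl
private lemma g_15_8 : gramN 15 8 = 0 := rfl
private lemma g_16_8 : gramN 16 8 = 0 := rfl
private lemma g_17_8 : gramN 17 8 = 0 := rfl
private lemma g_18_8 : gramN 18 8 = 0 := rfl
private lemma g_19_8 : gramN 19 8 = 0 := rfl
private lemma g_0_9 : gramN 0 9 = 0 := rfl
private lemma g_1_9 : gramN 1 9 = 0 := rfl
private lemma g_2_9 : gramN 2 9 = 0 := rfl
private lemma g_3_9 : gramN 3 9 = 0 := rfl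
private lemma g_4_9 : gramN 4 9 = 0 := rfl
private lemma g_5_9 : gramN 5 9 = 0 := rfl
private lemma g_6_9 : gramN 6 9 = 0 := rfl
private lemma g_7_9 : gramN 7 9 = 0 := rfl
private lemma g_8_9 : gramN 8 9 = 1 := rfl
private lemma g_9_9 : gramN 9 9 = -2 := rfl
private lemma g_10_9 : gramN 10 9 = 1 := rfl
private lemma g_11_9 : gramN 11 9 = 0 := rfl
private lemma g_12_9 : gramN 12 9 = 0 := rfl
private lemma g_13_9 : gramN 13 9 = 0 := rfl
private lemma g_14_9 : gramN 14 9 = 0 := rfl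
private lemma g_15_9 : gramN 15 9 = 0 := rfl
private lemma g_16_9 : gramN 16 9 = 0 := rfl
private lemma g_17_9 : gramN 17 9 = 0 := rfl
private lemma g_18_9 : gramN 18 9 = 0 := rfl
private lemma g_19_9 : gramN 19 9 = 0 := rfl
private lemma g_0_10 : gramN 0 10 = 0 := rfl
private lemma g_1_10 : gramN 1 10 = 0 := rfl
private lemma g_2_10 : gramN 2 10 = 0 := rfl
private lemma g_3_10 : gramN 3 10 = 0 := rfl
private lemma g_4_10 : gramN 4 10 = 0 := rfl
private lemma g_5_10 : gramN 5 10 = 0 := rfl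
private lemma g_6_10 : gramN 6 10 = 0 := rfl
private lemma g_7_10 : gramN 7 10 = 0 := rfl
private lemma g_8_10 : gramN 8 10 = 0 := rfl
private lemma g_9_10 : gramN 9 10 = 1 := rfl
private lemma g_10_10 : gramN 10 10 = -2 := rfl
private lemma g_11_10 : gramN 11 10 = 1 := rfl
private lemma g_12_10 : gramN 12 10 = 0 := rfl
private lemma g_13_10 : gramN 13 10 = 0 := rfl
private lemma g_14_10 : gramN 14 10 = 0 := rfl
private lemma g_15_10 : gramN 15 10 = 0 := rfl
private lemma g_16_10 : gramN 16 10 = 0 := rfl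
private lemma g_17_10 : gramN 17 10 = 0 := rfl
private lemma g_18_10 : gramN 18 10 = 0 := rfl
private lemma g_19_10 : gramN 19 10 = 0 := rfl
private lemma g_0_11 : gramN 0 11 = 0 := rfl
private lemma g_1_11 : gramN 1 11 = 0 := rfl
private lemma g_2_11 : gramN 2 11 = 0 := rfl
private lemma g_3_11 : gramN 3 11 = 0 := rfl
private lemma g_4_11 : gramN 4 11 = 0 := rfl
private lemma g_5_11 : gramN 5 11 = 0 := rfl
private lemma g_6_11 : gramN 6 11 = 0 := rfl
private lemma g_7_11 : gramN 7 11 = 0 := rfl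
private lemma g_8_11 : gramN 8 11 = 0 := rfl
private lemma g_9_11 : gramN 9 11 = 0 := rfl
private lemma g_10_11 : gramN 10 11 = 1 := rfl
private lemma g_11_11 : gramN 11 11 = -2 := rfl
private lemma g_12_11 : gramN 12 11 = 1 := rfl
private lemma g_13_11 : gramN 13 11 = 0 := rfl
private lemma g_14_11 : gramN 14 11 = 0 := rfl
private lemma g_15_11 : gramN 15 11 = 0 := rfl
private lemma g_16_11 : gramN 16 11 = 0 := rfl
private lemma g_17_11 : gramN 17 11 = 0 := rfl
private lemma g_18_11 : gramN 18 11 = 0 := rfl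
private lemma g_19_11 : gramN 19 11 = 0 := rfl
private lemma g_0_12 : gramN 0 12 = 0 := rfl
private lemma g_1_12 : gramN 1 12 = 0 := rfl
private lemma g_2_12 : gramN 2 12 = 0 := rfl
private lemma g_3_12 : gramN 3 12 = 0 := rfl
private lemma g_4_12 : gramN 4 12 = 0 := rfl
private lemma g_5_12 : gramN 5 12 = 0 := rfl
private lemma g_6_12 : gramN 6 12 = 0 := rfl
private lemma g_7_12 : gramN 7 12 = 0 := rfl
private lemma g_8_12 : gramN 8 12 = 0 := rfl
private lemma g_9_12 : gramN 9 12 = 0 := rfl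
private lemma g_10_12 : gramN 10 12 = 0 := rfl
private lemma g_11_12 : gramN 11 12 = 1 := rfl
private lemma g_12_12 : gramN 12 12 = -2 := rfl
private lemma g_13_12 : gramN 13 12 = 1 := rfl
private lemma g_14_12 : gramN 14 12 = 0 := rfl
private lemma g_15_12 : gramN 15 12 = 0 := rfl
private lemma g_16_12 : gramN 16 12 = 0 := rfl
private lemma g_17_12 : gramN 17 12 = 0 := rfl
private lemma g_18_12 : gramN 18 12 = 0 := rfl
private lemma g_19_12 : gramN 19 12 = 0 := rfl
private lemma g_0_13 : gramN 0 13 = 0 := rfl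
private lemma g_1_13 : gramN 1 13 = 0 := rfl
private lemma g_2_13 : gramN 2 13 = 0 := rfl
private lemma g_3_13 : gramN 3 13 = 0 := rfl
private lemma g_4_13 : gramN 4 13 = 0 := rfl
private lemma g_5_13 : gramN 5 13 = 0 := rfl
private lemma g_6_13 : gramN 6 13 = 0 := rfl
private lemma g_7_13 : gramN 7 13 = 0 := rfl
private lemma g_8_13 : gramN 8 13 = 0 := rfl
private lemma g_9_13 : gramN 9 13 = 0 := rfl
private lemma g_10_13 : gramN 10 13 = 0 := rfl
private lemma g_11_13 : gramN 11 13 = 0 := rfl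
private lemma g_12_13 : gramN 12 13 = 1 := rfl
private lemma g_13_13 : gramN 13 13 = -2 := rfl
private lemma g_14_13 : gramN 14 13 = 1 := rfl
private lemma g_15_13 : gramN 15 13 = 0 := rfl
private lemma g_16_13 : gramN 16 13 = 0 := rfl
private lemma g_17_13 : gramN 17 13 = 0 := rfl
private lemma g_18_13 : gramN 18 13 = 0 := rfl
private lemma g_19_13 : gramN 19 13 = 0 := rfl
private lemma g_0_14 : gramN 0 14 = 0 := rfl
private lemma g_1_14 : gramN 1 14 = 0 := rfl
private lemma g_2_14 : gramN 2 14 = 0 := rfl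
private lemma g_3_14 : gramN 3 14 = 0 := rfl
private lemma g_4_14 : gramN 4 14 = 0 := rfl
private lemma g_5_14 : gramN 5 14 = 0 := rfl
private lemma g_6_14 : gramN 6 14 = 0 := rfl
private lemma g_7_14 : gramN 7 14 = 0 := rfl
private lemma g_8_14 : gramN 8 14 = 0 := rfl
private lemma g_9_14 : gramN 9 14 = 0 := rfl
private lemma g_10_14 : gramN 10 14 = 0 := rfl
private lemma g_11_14 : gramN 11 14 = 0 := rfl
private lemma g_12_14 : gramN 12 14 = 0 := rfl
private lemma g_13_14 : gramN 13 14 = 1 := rfl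
private lemma g_14_14 : gramN 14 14 = -2 := rfl
private lemma g_15_14 : gramN 15 14 = 1 := rfl
private lemma g_16_14 : gramN 16 14 = 0 := rfl
private lemma g_17_14 : gramN 17 14 = 0 := rfl
private lemma g_18_14 : gramN 18 14 = 0 := rfl
private lemma g_19_14 : gramN 19 14 = 0 := rfl
private lemma g_0_15 : gramN 0 15 = 0 := rfl
private lemma g_1_15 : gramN 1 15 = 0 := rfl
private lemma g_2_15 : gramN 2 15 = 0 := rfl
private lemma g_3_15 : gramN 3 15 = 0 := rfl
private lemma g_4_15 : gramN 4 15 = 0 := rfl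
private lemma g_5_15 : gramN 5 15 = 0 := rfl
private lemma g_6_15 : gramN 6 15 = 0 := rfl
private lemma g_7_15 : gramN 7 15 = 0 := rfl
private lemma g_8_15 : gramN 8 15 = 0 := rfl
private lemma g_9_15 : gramN 9 15 = 0 := rfl
private lemma g_10_15 : gramN 10 15 = 0 := rfl
private lemma g_11_15 : gramN 11 15 = 0 := rfl
private lemma g_12_15 : gramN 12 15 = 0 := rfl
private lemma g_13_15 : gramN 13 15 = 0 := rfl
private lemma g_14_15 : gramN 14 15 = 1 := rfl
private lemma g_15_15 : gramN 15 15 = -2 := rfl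
private lemma g_16_15 : gramN 16 15 = 1 := rfl
private lemma g_17_15 : gramN 17 15 = 0 := rfl
private lemma g_18_15 : gramN 18 15 = 0 := rfl
private lemma g_19_15 : gramN 19 15 = 0 := rfl
private lemma g_0_16 : gramN 0 16 = 0 := rfl
private lemma g_1_16 : gramN 1 16 = 0 := rfl
private lemma g_2_16 : gramN 2 16 = 0 := rfl
private lemma g_3_16 : gramN 3 16 = 0 := rfl
private lemma g_4_16 : gramN 4 16 = 0 := rfl
private lemma g_5_16 : gramN 5 16 = 0 := rfl
private lemma g_6_16 : gramN 6 16 = 0 := rfl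
private lemma g_7_16 : gramN 7 16 = 0 := rfl
private lemma g_8_16 : gramN 8 16 = 0 := rfl
private lemma g_9_16 : gramN 9 16 = 0 := rfl
private lemma g_10_16 : gramN 10 16 = 0 := rfl
private lemma g_11_16 : gramN 11 16 = 0 := rfl
private lemma g_12_16 : gramN 12 16 = 0 := rfl
private lemma g_13_16 : gramN 13 16 = 0 := rfl
private lemma g_14_16 : gramN 14 16 = 0 := rfl
private lemma g_15_16 : gramN 15 16 = 1 := rfl
private lemma g_16_16 : gramN 16 16 = -2 := rfl
private lemma g_17_16 : gramN 17 16 = 1 := rfl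
private lemma g_18_16 : gramN 18 16 = 0 := rfl
private lemma g_19_16 : gramN 19 16 = 0 := rfl
private lemma g_0_17 : gramN 0 17 = 0 := rfl
private lemma g_1_17 : gramN 1 17 = 0 := rfl
private lemma g_2_17 : gramN 2 17 = 0 := rfl
private lemma g_3_17 : gramN 3 17 = 0 := rfl
private lemma g_4_17 : gramN 4 17 = 0 := rfl
private lemma g_5_17 : gramN 5 17 = 0 := rfl
private lemma g_6_17 : gramN 6 17 = 0 := rfl
private lemma g_7_17 : gramN 7 17 = 0 := rfl
private lemma g_8_17 : gramN 8 17 = 0 := rfl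
private lemma g_9_17 : gramN 9 17 = 0 := rfl
private lemma g_10_17 : gramN 10 17 = 0 := rfl
private lemma g_11_17 : gramN 11 17 = 0 := rfl
private lemma g_12_17 : gramN 12 17 = 0 := rfl
private lemma g_13_17 : gramN 13 17 = 0 := rfl
private lemma g_14_17 : gramN 14 17 = 0 := rfl
private lemma g_15_17 : gramN 15 17 = 0 := rfl
private lemma g_16_17 : gramN 16 17 = 1 := rfl
private lemma g_17_17 : gramN 17 17 = -2 := rfl
private lemma g_18_17 : gramN 18 17 = 0 := rfl
private lemma g_19_17 : gramN 19 17 = 0 := rfl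
private lemma g_0_18 : gramN 0 18 = 0 := rfl
private lemma g_1_18 : gramN 1 18 = 0 := rfl
private lemma g_2_18 : gramN 2 18 = 0 := rfl
private lemma g_3_18 : gramN 3 18 = 0 := rfl
private lemma g_4_18 : gramN 4 18 = 0 := rfl
private lemma g_5_18 : gramN 5 18 = 0 := rfl
private lemma g_6_18 : gramN 6 18 = 0 := rfl
private lemma g_7_18 : gramN 7 18 = 0 := rfl
private lemma g_8_18 : gramN 8 18 = 0 := rfl
private lemma g_9_18 : gramN 9 18 = 0 := rfl
private lemma g_10_18 : gramN 10 18 = 0 := rfl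
private lemma g_11_18 : gramN 11 18 = 0 := rfl
private lemma g_12_18 : gramN 12 18 = 0 := rfl
private lemma g_13_18 : gramN 13 18 = 0 := rfl
private lemma g_14_18 : gramN 14 18 = 0 := rfl
private lemma g_15_18 : gramN 15 18 = 0 := rfl
private lemma g_16_18 : gramN 16 18 = 0 := rfl
private lemma g_17_18 : gramN 17 18 = 0 := rfl
private lemma g_18_18 : gramN 18 18 = -2 := rfl
private lemma g_19_18 : gramN 19 18 = 0 := rfl
private lemma g_0_19 : gramN 0 19 = 0 := rfl
private lemma g_1_19 : gramN 1 19 = 0 := rfl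
private lemma g_2_19 : gramN 2 19 = 0 := rfl
private lemma g_3_19 : gramN 3 19 = 0 := rfl
private lemma g_4_19 : gramN 4 19 = 0 := rfl
private lemma g_5_19 : gramN 5 19 = 0 := rfl
private lemma g_6_19 : gramN 6 19 = 0 := rfl
private lemma g_7_19 : gramN 7 19 = 0 := rfl
private lemma g_8_19 : gramN 8 19 = 0 := rfl
private lemma g_9_19 : gramN 9 19 = 0 := rfl
private lemma g_10_19 : gramN 10 19 = 0 := rfl
private lemma g_11_19 : gramN 11 19 = 0 := rfl
private lemma g_12_19 : gramN 12 19 = 0 := rfl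
private lemma g_13_19 : gramN 13 19 = 0 := rfl
private lemma g_14_19 : gramN 14 19 = 0 := rfl
private lemma g_15_19 : gramN 15 19 = 0 := rfl
private lemma g_16_19 : gramN 16 19 = 0 := rfl
private lemma g_17_19 : gramN 17 19 = 0 := rfl
private lemma g_18_19 : gramN 18 19 = 0 := rfl
private lemma g_19_19 : gramN 19 19 = -2 := rfl

private lemma uval_0 : u 0 = (1/2) := by simp only [u, fv_0]; norm_num
private lemma vval_0 : v 0 = (1/2) := by simp only [v, fv_0]; norm_num
private lemma sval_0 : s3 0 = 0 := by simp only [s3, fv_0]; norm_num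
private lemma uval_1 : u 1 = (1/2) := by simp only [u, fv_1]; norm_num
private lemma vval_1 : v 1 = (1/6) := by simp only [v, fv_1]; norm_num
private lemma sval_1 : s3 1 = (1/3) := by simp only [s3, fv_1]; norm_num
private lemma uval_2 : u 2 = 1 := by simp only [u, fv_2]; norm_num
private lemma vval_2 : v 2 = (1/3) := by simp only [v, fv_2]; norm_num
private lemma sval_2 : s3 2 = (2/3) := by simp only [s3, fv_2]; norm_num
private lemma uval_3 : u 3 = (3/2) := by simp only [u, fv_3]; norm_num
private lemma vval_3 : v 3 = (1/2) := by simp only [v, fv_3]; norm_num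
private lemma sval_3 : s3 3 = 1 := by simp only [s3, fv_3]; norm_num
private lemma uval_4 : u 4 = 2 := by simp only [u, fv_4]; norm_num
private lemma vval_4 : v 4 = (2/3) := by simp only [v, fv_4]; norm_num
private lemma sval_4 : s3 4 = (4/3) := by simp only [s3, fv_4]; norm_num
private lemma uval_5 : u 5 = (5/2) := by simp only [u, fv_5]; norm_num
private lemma vval_5 : v 5 = (5/6) := by simp only [v, fv_5]; norm_num
private lemma sval_5 : s3 5 = (5/3) := by simp only [s3, fv_5]; norm_num
private lemma uval_6 : u 6 = 3 := by simp only [u, fv_6]; norm_num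
private lemma vval_6 : v 6 = 1 := by simp only [v, fv_6]; norm_num
private lemma sval_6 : s3 6 = 2 := by simp only [s3, fv_6]; norm_num
private lemma uval_7 : u 7 = (7/2) := by simp only [u, fv_7]; norm_num
private lemma vval_7 : v 7 = (7/6) := by simp only [v, fv_7]; norm_num
private lemma sval_7 : s3 7 = (7/3) := by simp only [s3, fv_7]; norm_num
private lemma uval_8 : u 8 = 4 := by simp only [u, fv_8]; norm_num
private lemma vval_8 : v 8 = (4/3) := by simp only [v, fv_8]; norm_num
private lemma sval_8 : s3 8 = (8/3) := by simp only [s3, fv_8]; norm_num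
private lemma uval_9 : u 9 = (9/2) := by simp only [u, fv_9]; norm_num
private lemma vval_9 : v 9 = (3/2) := by simp only [v, fv_9]; norm_num
private lemma sval_9 : s3 9 = 3 := by simp only [s3, fv_9]; norm_num
private lemma uval_10 : u 10 = 5 := by simp only [u, fv_10]; norm_num
private lemma vval_10 : v 10 = (5/3) := by simp only [v, fv_10]; norm_num
private lemma sval_10 : s3 10 = (10/3) := by simp only [s3, fv_10]; norm_num
private lemma uval_11 : u 11 = (11/2) := by simp only [u, fv_11]; norm_num
private lemma vval_11 : v 11 = (11/6) := by simp only [v, fv_11]; norm_num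
private lemma sval_11 : s3 11 = (11/3) := by simp only [s3, fv_11]; norm_num
private lemma uval_12 : u 12 = 6 := by simp only [u, fv_12]; norm_num
private lemma vval_12 : v 12 = 2 := by simp only [v, fv_12]; norm_num
private lemma sval_12 : s3 12 = 4 := by simp only [s3, fv_12]; norm_num
private lemma uval_13 : u 13 = (13/2) := by simp only [u, fv_13]; norm_num
private lemma vval_13 : v 13 = (13/6) := by simp only [v, fv_13]; norm_num
private lemma sval_13 : s3 13 = (13/3) := by simp only [s3, fv_13]; norm_num
private lemma uval_14 : u 14 = 7 := by simp only [u, fv_14]; norm_num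
private lemma vval_14 : v 14 = (7/3) := by simp only [v, fv_14]; norm_num
private lemma sval_14 : s3 14 = (14/3) := by simp only [s3, fv_14]; norm_num
private lemma uval_15 : u 15 = (15/2) := by simp only [u, fv_15]; norm_num
private lemma vval_15 : v 15 = (5/2) := by simp only [v, fv_15]; norm_num
private lemma sval_15 : s3 15 = 5 := by simp only [s3, fv_15]; norm_num
private lemma uval_16 : u 16 = 8 := by simp only [u, fv_16]; norm_num
private lemma vval_16 : v 16 = (8/3) := by simp only [v, fv_16]; norm_num
private lemma sval_16 : s3 16 = (16/3) := by simp only [s3, fv_16]; norm_num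
private lemma uval_17 : u 17 = (17/2) := by simp only [u, fv_17]; norm_num
private lemma vval_17 : v 17 = (17/6) := by simp only [v, fv_17]; norm_num
private lemma sval_17 : s3 17 = (17/3) := by simp only [s3, fv_17]; norm_num
private lemma uval_18 : u 18 = 0 := by simp only [u, fv_18]; norm_num
private lemma vval_18 : v 18 = 0 := by simp only [v, fv_18]; norm_num
private lemma sval_18 : s3 18 = 0 := by simp only [s3, fv_18]; norm_num
private lemma uval_19 : u 19 = 0 := by simp only [u, fv_19]; norm_num
private lemma vval_19 : v 19 = 0 := by simp only [v, fv_19]; norm_num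
private lemma sval_19 : s3 19 = 0 := by simp only [s3, fv_19]; norm_num

private lemma vmu_0 : vecMul u gramN 0 = 1 := by
  rw [show vecMul u gramN 0 = u ⬝ᵥ (fun i => gramN i (0:Fin 20)) from rfl, dot20]
  simp only [g_0_0, g_1_0, g_2_0, g_3_0, g_4_0, g_5_0, g_6_0, g_7_0, g_8_0, g_9_0, g_10_0, g_11_0, g_12_0, g_13_0, g_14_0, g_15_0, g_16_0, g_17_0, g_18_0, g_19_0, uval_0, uval_1, uval_2, uval_3, uval_4, uval_5, uval_6, uval_7, uval_8, uval_9, uval_10, uval_11, uval_12, uval_13, uval_14, uval_15, uval_16, uval_17, uval_18, uval_19]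
  norm_num
private lemma vmu_1 : vecMul u gramN 1 = 0 := by
  rw [show vecMul u gramN 1 = u ⬝ᵥ (fun i => gramN i (1:Fin 20)) from rfl, dot20]
  simp only [g_0_1, g_1_1, g_2_1, g_3_1, g_4_1, g_5_1, g_6_1, g_7_1, g_8_1, g_9_1, g_10_1, g_11_1, g_12_1, g_13_1, g_14_1, g_15_1, g_16_1, g_17_1, g_18_1, g_19_1, uval_0, uval_1, uval_2, uval_3, uval_4, uval_5, uval_6, uval_7, uval_8, uval_9, uval_10, uval_11, uval_12, uval_13, uval_14, uval_15, uval_16, uval_17, uval_18, uval_19]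
  norm_num
private lemma vmu_2 : vecMul u gramN 2 = 0 := by
  rw [show vecMul u gramN 2 = u ⬝ᵥ (fun i => gramN i (2:Fin 20)) from rfl, dot20]
  simp only [g_0_2, g_1_2, g_2_2, g_3_2, g_4_2, g_5_2, g_6_2, g_7_2, g_8_2, g_9_2, g_10_2, g_11_2, g_12_2, g_13_2, g_14_2, g_15_2, g_16_2, g_17_2, g_18_2, g_19_2, uval_0, uval_1, uval_2, uval_3, uval_4, uval_5, uval_6, uval_7, uval_8, uval_9, uval_10, uval_11, uval_12, uval_13, uval_14, uval_15, uval_16, uval_17, uval_18, uval_19]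
  norm_num
private lemma vmu_3 : vecMul u gramN 3 = 0 := by
  rw [show vecMul u gramN 3 = u ⬝ᵥ (fun i => gramN i (3:Fin 20)) from rfl, dot20]
  simp only [g_0_3, g_1_3, g_2_3, g_3_3, g_4_3, g_5_3, g_6_3, g_7_3, g_8_3, g_9_3, g_10_3, g_11_3, g_12_3, g_13_3, g_14_3, g_15_3, g_16_3, g_17_3, g_18_3, g_19_3, uval_0, uval_1, uval_2, uval_3, uval_4, uval_5, uval_6, uval_7, uval_8, uval_9, uval_10, uval_11, uval_12, uval_13, uval_14, uval_15, uval_16, uval_17, uval_18, uval_19]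
  norm_num
private lemma vmu_4 : vecMul u gramN 4 = 0 := by
  rw [show vecMul u gramN 4 = u ⬝ᵥ (fun i => gramN i (4:Fin 20)) from rfl, dot20]
  simp only [g_0_4, g_1_4, g_2_4, g_3_4, g_4_4, g_5_4, g_6_4, g_7_4, g_8_4, g_9_4, g_10_4, g_11_4, g_12_4, g_13_4, g_14_4, g_15_4, g_16_4, g_17_4, g_18_4, g_19_4, uval_0, uval_1, uval_2, uval_3, uval_4, uval_5, uval_6, uval_7, uval_8, uval_9, uval_10, uval_11, uval_12, uval_13, uval_14, uval_15, uval_16, uval_17, uval_18, uval_19]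
  norm_num
private lemma vmu_5 : vecMul u gramN 5 = 0 := by
  rw [show vecMul u gramN 5 = u ⬝ᵥ (fun i => gramN i (5:Fin 20)) from rfl, dot20]
  simp only [g_0_5, g_1_5, g_2_5, g_3_5, g_4_5, g_5_5, g_6_5, g_7_5, g_8_5, g_9_5, g_10_5, g_11_5, g_12_5, g_13_5, g_14_5, g_15_5, g_16_5, g_17_5, g_18_5, g_19_5, uval_0, uval_1, uval_2, uval_3, uval_4, uval_5, uval_6, uval_7, uval_8, uval_9, uval_10, uval_11, uval_12, uval_13, uval_14, uval_15, uval_16, uval_17, uval_18, uval_19]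
  norm_num
private lemma vmu_6 : vecMul u gramN 6 = 0 := by
  rw [show vecMul u gramN 6 = u ⬝ᵥ (fun i => gramN i (6:Fin 20)) from rfl, dot20]
  simp only [g_0_6, g_1_6, g_2_6, g_3_6, g_4_6, g_5_6, g_6_6, g_7_6, g_8_6, g_9_6, g_10_6, g_11_6, g_12_6, g_13_6, g_14_6, g_15_6, g_16_6, g_17_6, g_18_6, g_19_6, uval_0, uval_1, uval_2, uval_3, uval_4, uval_5, uval_6, uval_7, uval_8, uval_9, uval_10, uval_11, uval_12, uval_13, uval_14, uval_15, uval_16, uval_17, uval_18, uval_19]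
  norm_num
private lemma vmu_7 : vecMul u gramN 7 = 0 := by
  rw [show vecMul u gramN 7 = u ⬝ᵥ (fun i => gramN i (7:Fin 20)) from rfl, dot20]
  simp only [g_0_7, g_1_7, g_2_7, g_3_7, g_4_7, g_5_7, g_6_7, g_7_7, g_8_7, g_9_7, g_10_7, g_11_7, g_12_7, g_13_7, g_14_7, g_15_7, g_16_7, g_17_7, g_18_7, g_19_7, uval_0, uval_1, uval_2, uval_3, uval_4, uval_5, uval_6, uval_7, uval_8, uval_9, uval_10, uval_11, uval_12, uval_13, uval_14, uval_15, uval_16, uval_17, uval_18, uval_19]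
  norm_num
private lemma vmu_8 : vecMul u gramN 8 = 0 := by
  rw [show vecMul u gramN 8 = u ⬝ᵥ (fun i => gramN i (8:Fin 20)) from rfl, dot20]
  simp only [g_0_8, g_1_8, g_2_8, g_3_8, g_4_8, g_5_8, g_6_8, g_7_8, g_8_8, g_9_8, g_10_8, g_11_8, g_12_8, g_13_8, g_14_8, g_15_8, g_16_8, g_17_8, g_18_8, g_19_8, uval_0, uval_1, uval_2, uval_3, uval_4, uval_5, uval_6, uval_7, uval_8, uval_9, uval_10, uval_11, uval_12, uval_13, uval_14, uval_15, uval_16, uval_17, uval_18, uval_19]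
  norm_num
private lemma vmu_9 : vecMul u gramN 9 = 0 := by
  rw [show vecMul u gramN 9 = u ⬝ᵥ (fun i => gramN i (9:Fin 20)) from rfl, dot20]
  simp only [g_0_9, g_1_9, g_2_9, g_3_9, g_4_9, g_5_9, g_6_9, g_7_9, g_8_9, g_9_9, g_10_9, g_11_9, g_12_9, g_13_9, g_14_9, g_15_9, g_16_9, g_17_9, g_18_9, g_19_9, uval_0, uval_1, uval_2, uval_3, uval_4, uval_5, uval_6, uval_7, uval_8, uval_9, uval_10, uval_11, uval_12, uval_13, uval_14, uval_15, uval_16, uval_17, uval_18, uval_19]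
  norm_num
private lemma vmu_10 : vecMul u gramN 10 = 0 := by
  rw [show vecMul u gramN 10 = u ⬝ᵥ (fun i => gramN i (10:Fin 20)) from rfl, dot20]
  simp only [g_0_10, g_1_10, g_2_10, g_3_10, g_4_10, g_5_10, g_6_10, g_7_10, g_8_10, g_9_10, g_10_10, g_11_10, g_12_10, g_13_10, g_14_10, g_15_10, g_16_10, g_17_10, g_18_10, g_19_10, uval_0, uval_1, uval_2, uval_3, uval_4, uval_5, uval_6, uval_7, uval_8, uval_9, uval_10, uval_11, uval_12, uval_13, uval_14, uval_15, uval_16, uval_17, uval_18, uval_19]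
  norm_num
private lemma vmu_11 : vecMul u gramN 11 = 0 := by
  rw [show vecMul u gramN 11 = u ⬝ᵥ (fun i => gramN i (11:Fin 20)) from rfl, dot20]
  simp only [g_0_11, g_1_11, g_2_11, g_3_11, g_4_11, g_5_11, g_6_11, g_7_11, g_8_11, g_9_11, g_10_11, g_11_11, g_12_11, g_13_11, g_14_11, g_15_11, g_16_11, g_17_11, g_18_11, g_19_11, uval_0, uval_1, uval_2, uval_3, uval_4, uval_5, uval_6, uval_7, uval_8, uval_9, uval_10, uval_11, uval_12, uval_13, uval_14, uval_15, uval_16, uval_17, uval_18, uval_19]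
  norm_num
private lemma vmu_12 : vecMul u gramN 12 = 0 := by
  rw [show vecMul u gramN 12 = u ⬝ᵥ (fun i => gramN i (12:Fin 20)) from rfl, dot20]
  simp only [g_0_12, g_1_12, g_2_12, g_3_12, g_4_12, g_5_12, g_6_12, g_7_12, g_8_12, g_9_12, g_10_12, g_11_12, g_12_12, g_13_12, g_14_12, g_15_12, g_16_12, g_17_12, g_18_12, g_19_12, uval_0, uval_1, uval_2, uval_3, uval_4, uval_5, uval_6, uval_7, uval_8, uval_9, uval_10, uval_11, uval_12, uval_13, uval_14, uval_15, uval_16, uval_17, uval_18, uval_19]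
  norm_num
private lemma vmu_13 : vecMul u gramN 13 = 0 := by
  rw [show vecMul u gramN 13 = u ⬝ᵥ (fun i => gramN i (13:Fin 20)) from rfl, dot20]
  simp only [g_0_13, g_1_13, g_2_13, g_3_13, g_4_13, g_5_13, g_6_13, g_7_13, g_8_13, g_9_13, g_10_13, g_11_13, g_12_13, g_13_13, g_14_13, g_15_13, g_16_13, g_17_13, g_18_13, g_19_13, uval_0, uval_1, uval_2, uval_3, uval_4, uval_5, uval_6, uval_7, uval_8, uval_9, uval_10, uval_11, uval_12, uval_13, uval_14, uval_15, uval_16, uval_17, uval_18, uval_19]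
  norm_num
private lemma vmu_14 : vecMul u gramN 14 = 0 := by
  rw [show vecMul u gramN 14 = u ⬝ᵥ (fun i => gramN i (14:Fin 20)) from rfl, dot20]
  simp only [g_0_14, g_1_14, g_2_14, g_3_14, g_4_14, g_5_14, g_6_14, g_7_14, g_8_14, g_9_14, g_10_14, g_11_14, g_12_14, g_13_14, g_14_14, g_15_14, g_16_14, g_17_14, g_18_14, g_19_14, uval_0, uval_1, uval_2, uval_3, uval_4, uval_5, uval_6, uval_7, uval_8, uval_9, uval_10, uval_11, uval_12, uval_13, uval_14, uval_15, uval_16, uval_17, uval_18, uval_19]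
  norm_num
private lemma vmu_15 : vecMul u gramN 15 = 0 := by
  rw [show vecMul u gramN 15 = u ⬝ᵥ (fun i => gramN i (15:Fin 20)) from rfl, dot20]
  simp only [g_0_15, g_1_15, g_2_15, g_3_15, g_4_15, g_5_15, g_6_15, g_7_15, g_8_15, g_9_15, g_10_15, g_11_15, g_12_15, g_13_15, g_14_15, g_15_15, g_16_15, g_17_15, g_18_15, g_19_15, uval_0, uval_1, uval_2, uval_3, uval_4, uval_5, uval_6, uval_7, uval_8, uval_9, uval_10, uval_11, uval_12, uval_13, uval_14, uval_15, uval_16, uval_17, uval_18, uval_19]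
  norm_num
private lemma vmu_16 : vecMul u gramN 16 = 0 := by
  rw [show vecMul u gramN 16 = u ⬝ᵥ (fun i => gramN i (16:Fin 20)) from rfl, dot20]
  simp only [g_0_16, g_1_16, g_2_16, g_3_16, g_4_16, g_5_16, g_6_16, g_7_16, g_8_16, g_9_16, g_10_16, g_11_16, g_12_16, g_13_16, g_14_16, g_15_16, g_16_16, g_17_16, g_18_16, g_19_16, uval_0, uval_1, uval_2, uval_3, uval_4, uval_5, uval_6, uval_7, uval_8, uval_9, uval_10, uval_11, uval_12, uval_13, uval_14, uval_15, uval_16, uval_17, uval_18, uval_19]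
  norm_num
private lemma vmu_17 : vecMul u gramN 17 = -9 := by
  rw [show vecMul u gramN 17 = u ⬝ᵥ (fun i => gramN i (17:Fin 20)) from rfl, dot20]
  simp only [g_0_17, g_1_17, g_2_17, g_3_17, g_4_17, g_5_17, g_6_17, g_7_17, g_8_17, g_9_17, g_10_17, g_11_17, g_12_17, g_13_17, g_14_17, g_15_17, g_16_17, g_17_17, g_18_17, g_19_17, uval_0, uval_1, uval_2, uval_3, uval_4, uval_5, uval_6, uval_7, uval_8, uval_9, uval_10, uval_11, uval_12, uval_13, uval_14, uval_15, uval_16, uval_17, uval_18, uval_19]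
  norm_num
private lemma vmu_18 : vecMul u gramN 18 = 0 := by
  rw [show vecMul u gramN 18 = u ⬝ᵥ (fun i => gramN i (18:Fin 20)) from rfl, dot20]
  simp only [g_0_18, g_1_18, g_2_18, g_3_18, g_4_18, g_5_18, g_6_18, g_7_18, g_8_18, g_9_18, g_10_18, g_11_18, g_12_18, g_13_18, g_14_18, g_15_18, g_16_18, g_17_18, g_18_18, g_19_18, uval_0, uval_1, uval_2, uval_3, uval_4, uval_5, uval_6, uval_7, uval_8, uval_9, uval_10, uval_11, uval_12, uval_13, uval_14, uval_15, uval_16, uval_17, uval_18, uval_19]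
  norm_num
private lemma vmu_19 : vecMul u gramN 19 = 0 := by
  rw [show vecMul u gramN 19 = u ⬝ᵥ (fun i => gramN i (19:Fin 20)) from rfl, dot20]
  simp only [g_0_19, g_1_19, g_2_19, g_3_19, g_4_19, g_5_19, g_6_19, g_7_19, g_8_19, g_9_19, g_10_19, g_11_19, g_12_19, g_13_19, g_14_19, g_15_19, g_16_19, g_17_19, g_18_19, g_19_19, uval_0, uval_1, uval_2, uval_3, uval_4, uval_5, uval_6, uval_7, uval_8, uval_9, uval_10, uval_11, uval_12, uval_13, uval_14, uval_15, uval_16, uval_17, uval_18, uval_19]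
  norm_num
private lemma vmv_0 : vecMul v gramN 0 = 1 := by
  rw [show vecMul v gramN 0 = v ⬝ᵥ (fun i => gramN i (0:Fin 20)) from rfl, dot20]
  simp only [g_0_0, g_1_0, g_2_0, g_3_0, g_4_0, g_5_0, g_6_0, g_7_0, g_8_0, g_9_0, g_10_0, g_11_0, g_12_0, g_13_0, g_14_0, g_15_0, g_16_0, g_17_0, g_18_0, g_19_0, vval_0, vval_1, vval_2, vval_3, vval_4, vval_5, vval_6, vval_7, vval_8, vval_9, vval_10, vval_11, vval_12, vval_13, vval_14, vval_15, vval_16, vval_17, vval_18, vval_19]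
  norm_num
private lemma vmv_1 : vecMul v gramN 1 = 0 := by
  rw [show vecMul v gramN 1 = v ⬝ᵥ (fun i => gramN i (1:Fin 20)) from rfl, dot20]
  simp only [g_0_1, g_1_1, g_2_1, g_3_1, g_4_1, g_5_1, g_6_1, g_7_1, g_8_1, g_9_1, g_10_1, g_11_1, g_12_1, g_13_1, g_14_1, g_15_1, g_16_1, g_17_1, g_18_1, g_19_1, vval_0, vval_1, vval_2, vval_3, vval_4, vval_5, vval_6, vval_7, vval_8, vval_9, vval_10, vval_11, vval_12, vval_13, vval_14, vval_15, vval_16, vval_17, vval_18, vval_19]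
  norm_num
private lemma vmv_2 : vecMul v gramN 2 = 0 := by
  rw [show vecMul v gramN 2 = v ⬝ᵥ (fun i => gramN i (2:Fin 20)) from rfl, dot20]
  simp only [g_0_2, g_1_2, g_2_2, g_3_2, g_4_2, g_5_2, g_6_2, g_7_2, g_8_2, g_9_2, g_10_2, g_11_2, g_12_2, g_13_2, g_14_2, g_15_2, g_16_2, g_17_2, g_18_2, g_19_2, vval_0, vval_1, vval_2, vval_3, vval_4, vval_5, vval_6, vval_7, vval_8, vval_9, vval_10, vval_11, vval_12, vval_13, vval_14, vval_15, vval_16, vval_17, vval_18, vval_19]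
  norm_num
private lemma vmv_3 : vecMul v gramN 3 = 0 := by
  rw [show vecMul v gramN 3 = v ⬝ᵥ (fun i => gramN i (3:Fin 20)) from rfl, dot20]
  simp only [g_0_3, g_1_3, g_2_3, g_3_3, g_4_3, g_5_3, g_6_3, g_7_3, g_8_3, g_9_3, g_10_3, g_11_3, g_12_3, g_13_3, g_14_3, g_15_3, g_16_3, g_17_3, g_18_3, g_19_3, vval_0, vval_1, vval_2, vval_3, vval_4, vval_5, vval_6, vval_7, vval_8, vval_9, vval_10, vval_11, vval_12, vval_13, vval_14, vval_15, vval_16, vval_17, vval_18, vval_19]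
  norm_num
private lemma vmv_4 : vecMul v gramN 4 = 0 := by
  rw [show vecMul v gramN 4 = v ⬝ᵥ (fun i => gramN i (4:Fin 20)) from rfl, dot20]
  simp only [g_0_4, g_1_4, g_2_4, g_3_4, g_4_4, g_5_4, g_6_4, g_7_4, g_8_4, g_9_4, g_10_4, g_11_4, g_12_4, g_13_4, g_14_4, g_15_4, g_16_4, g_17_4, g_18_4, g_19_4, vval_0, vval_1, vval_2, vval_3, vval_4, vval_5, vval_6, vval_7, vval_8, vval_9, vval_10, vval_11, vval_12, vval_13, vval_14, vval_15, vval_16, vval_17, vval_18, vval_19]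
  norm_num
private lemma vmv_5 : vecMul v gramN 5 = 0 := by
  rw [show vecMul v gramN 5 = v ⬝ᵥ (fun i => gramN i (5:Fin 20)) from rfl, dot20]
  simp only [g_0_5, g_1_5, g_2_5, g_3_5, g_4_5, g_5_5, g_6_5, g_7_5, g_8_5, g_9_5, g_10_5, g_11_5, g_12_5, g_13_5, g_14_5, g_15_5, g_16_5, g_17_5, g_18_5, g_19_5, vval_0, vval_1, vval_2, vval_3, vval_4, vval_5, vval_6, vval_7, vval_8, vval_9, vval_10, vval_11, vval_12, vval_13, vval_14, vval_15, vval_16, vval_17, vval_18, vval_19]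
  norm_num
private lemma vmv_6 : vecMul v gramN 6 = 0 := by
  rw [show vecMul v gramN 6 = v ⬝ᵥ (fun i => gramN i (6:Fin 20)) from rfl, dot20]
  simp only [g_0_6, g_1_6, g_2_6, g_3_6, g_4_6, g_5_6, g_6_6, g_7_6, g_8_6, g_9_6, g_10_6, g_11_6, g_12_6, g_13_6, g_14_6, g_15_6, g_16_6, g_17_6, g_18_6, g_19_6, vval_0, vval_1, vval_2, vval_3, vval_4, vval_5, vval_6, vval_7, vval_8, vval_9, vval_10, vval_11, vval_12, vval_13, vval_14, vval_15, vval_16, vval_17, vval_18, vval_19]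
  norm_num
private lemma vmv_7 : vecMul v gramN 7 = 0 := by
  rw [show vecMul v gramN 7 = v ⬝ᵥ (fun i => gramN i (7:Fin 20)) from rfl, dot20]
  simp only [g_0_7, g_1_7, g_2_7, g_3_7, g_4_7, g_5_7, g_6_7, g_7_7, g_8_7, g_9_7, g_10_7, g_11_7, g_12_7, g_13_7, g_14_7, g_15_7, g_16_7, g_17_7, g_18_7, g_19_7, vval_0, vval_1, vval_2, vval_3, vval_4, vval_5, vval_6, vval_7, vval_8, vval_9, vval_10, vval_11, vval_12, vval_13, vval_14, vval_15, vval_16, vval_17, vval_18, vval_19]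
  norm_num
private lemma vmv_8 : vecMul v gramN 8 = 0 := by
  rw [show vecMul v gramN 8 = v ⬝ᵥ (fun i => gramN i (8:Fin 20)) from rfl, dot20]
  simp only [g_0_8, g_1_8, g_2_8, g_3_8, g_4_8, g_5_8, g_6_8, g_7_8, g_8_8, g_9_8, g_10_8, g_11_8, g_12_8, g_13_8, g_14_8, g_15_8, g_16_8, g_17_8, g_18_8, g_19_8, vval_0, vval_1, vval_2, vval_3, vval_4, vval_5, vval_6, vval_7, vval_8, vval_9, vval_10, vval_11, vval_12, vval_13, vval_14, vval_15, vval_16, vval_17, vval_18, vval_19]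
  norm_num
private lemma vmv_9 : vecMul v gramN 9 = 0 := by
  rw [show vecMul v gramN 9 = v ⬝ᵥ (fun i => gramN i (9:Fin 20)) from rfl, dot20]
  simp only [g_0_9, g_1_9, g_2_9, g_3_9, g_4_9, g_5_9, g_6_9, g_7_9, g_8_9, g_9_9, g_10_9, g_11_9, g_12_9, g_13_9, g_14_9, g_15_9, g_16_9, g_17_9, g_18_9, g_19_9, vval_0, vval_1, vval_2, vval_3, vval_4, vval_5, vval_6, vval_7, vval_8, vval_9, vval_10, vval_11, vval_12, vval_13, vval_14, vval_15, vval_16, vval_17, vval_18, vval_19]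
  norm_num
private lemma vmv_10 : vecMul v gramN 10 = 0 := by
  rw [show vecMul v gramN 10 = v ⬝ᵥ (fun i => gramN i (10:Fin 20)) from rfl, dot20]
  simp only [g_0_10, g_1_10, g_2_10, g_3_10, g_4_10, g_5_10, g_6_10, g_7_10, g_8_10, g_9_10, g_10_10, g_11_10, g_12_10, g_13_10, g_14_10, g_15_10, g_16_10, g_17_10, g_18_10, g_19_10, vval_0, vval_1, vval_2, vval_3, vval_4, vval_5, vval_6, vval_7, vval_8, vval_9, vval_10, vval_11, vval_12, vval_13, vval_14, vval_15, vval_16, vval_17, vval_18, vval_19]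
  norm_num
private lemma vmv_11 : vecMul v gramN 11 = 0 := by
  rw [show vecMul v gramN 11 = v ⬝ᵥ (fun i => gramN i (11:Fin 20)) from rfl, dot20]
  simp only [g_0_11, g_1_11, g_2_11, g_3_11, g_4_11, g_5_11, g_6_11, g_7_11, g_8_11, g_9_11, g_10_11, g_11_11, g_12_11, g_13_11, g_14_11, g_15_11, g_16_11, g_17_11, g_18_11, g_19_11, vval_0, vval_1, vval_2, vval_3, vval_4, vval_5, vval_6, vval_7, vval_8, vval_9, vval_10, vval_11, vval_12, vval_13, vval_14, vval_15, vval_16, vval_17, vval_18, vval_19]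
  norm_num
private lemma vmv_12 : vecMul v gramN 12 = 0 := by
  rw [show vecMul v gramN 12 = v ⬝ᵥ (fun i => gramN i (12:Fin 20)) from rfl, dot20]
  simp only [g_0_12, g_1_12, g_2_12, g_3_12, g_4_12, g_5_12, g_6_12, g_7_12, g_8_12, g_9_12, g_10_12, g_11_12, g_12_12, g_13_12, g_14_12, g_15_12, g_16_12, g_17_12, g_18_12, g_19_12, vval_0, vval_1, vval_2, vval_3, vval_4, vval_5, vval_6, vval_7, vval_8, vval_9, vval_10, vval_11, vval_12, vval_13, vval_14, vval_15, vval_16, vval_17, vval_18, vval_19]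
  norm_num
private lemma vmv_13 : vecMul v gramN 13 = 0 := by
  rw [show vecMul v gramN 13 = v ⬝ᵥ (fun i => gramN i (13:Fin 20)) from rfl, dot20]
  simp only [g_0_13, g_1_13, g_2_13, g_3_13, g_4_13, g_5_13, g_6_13, g_7_13, g_8_13, g_9_13, g_10_13, g_11_13, g_12_13, g_13_13, g_14_13, g_15_13, g_16_13, g_17_13, g_18_13, g_19_13, vval_0, vval_1, vval_2, vval_3, vval_4, vval_5, vval_6, vval_7, vval_8, vval_9, vval_10, vval_11, vval_12, vval_13, vval_14, vval_15, vval_16, vval_17, vval_18, vval_19]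
  norm_num
private lemma vmv_14 : vecMul v gramN 14 = 0 := by
  rw [show vecMul v gramN 14 = v ⬝ᵥ (fun i => gramN i (14:Fin 20)) from rfl, dot20]
  simp only [g_0_14, g_1_14, g_2_14, g_3_14, g_4_14, g_5_14, g_6_14, g_7_14, g_8_14, g_9_14, g_10_14, g_11_14, g_12_14, g_13_14, g_14_14, g_15_14, g_16_14, g_17_14, g_18_14, g_19_14, vval_0, vval_1, vval_2, vval_3, vval_4, vval_5, vval_6, vval_7, vval_8, vval_9, vval_10, vval_11, vval_12, vval_13, vval_14, vval_15, vval_16, vval_17, vval_18, vval_19]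
  norm_num
private lemma vmv_15 : vecMul v gramN 15 = 0 := by
  rw [show vecMul v gramN 15 = v ⬝ᵥ (fun i => gramN i (15:Fin 20)) from rfl, dot20]
  simp only [g_0_15, g_1_15, g_2_15, g_3_15, g_4_15, g_5_15, g_6_15, g_7_15, g_8_15, g_9_15, g_10_15, g_11_15, g_12_15, g_13_15, g_14_15, g_15_15, g_16_15, g_17_15, g_18_15, g_19_15, vval_0, vval_1, vval_2, vval_3, vval_4, vval_5, vval_6, vval_7, vval_8, vval_9, vval_10, vval_11, vval_12, vval_13, vval_14, vval_15, vval_16, vval_17, vval_18, vval_19]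
  norm_num
private lemma vmv_16 : vecMul v gramN 16 = 0 := by
  rw [show vecMul v gramN 16 = v ⬝ᵥ (fun i => gramN i (16:Fin 20)) from rfl, dot20]
  simp only [g_0_16, g_1_16, g_2_16, g_3_16, g_4_16, g_5_16, g_6_16, g_7_16, g_8_16, g_9_16, g_10_16, g_11_16, g_12_16, g_13_16, g_14_16, g_15_16, g_16_16, g_17_16, g_18_16, g_19_16, vval_0, vval_1, vval_2, vval_3, vval_4, vval_5, vval_6, vval_7, vval_8, vval_9, vval_10, vval_11, vval_12, vval_13, vval_14, vval_15, vval_16, vval_17, vval_18, vval_19]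
  norm_num
private lemma vmv_17 : vecMul v gramN 17 = -3 := by
  rw [show vecMul v gramN 17 = v ⬝ᵥ (fun i => gramN i (17:Fin 20)) from rfl, dot20]
  simp only [g_0_17, g_1_17, g_2_17, g_3_17, g_4_17, g_5_17, g_6_17, g_7_17, g_8_17, g_9_17, g_10_17, g_11_17, g_12_17, g_13_17, g_14_17, g_15_17, g_16_17, g_17_17, g_18_17, g_19_17, vval_0, vval_1, vval_2, vval_3, vval_4, vval_5, vval_6, vval_7, vval_8, vval_9, vval_10, vval_11, vval_12, vval_13, vval_14, vval_15, vval_16, vval_17, vval_18, vval_19]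
  norm_num
private lemma vmv_18 : vecMul v gramN 18 = 0 := by
  rw [show vecMul v gramN 18 = v ⬝ᵥ (fun i => gramN i (18:Fin 20)) from rfl, dot20]
  simp only [g_0_18, g_1_18, g_2_18, g_3_18, g_4_18, g_5_18, g_6_18, g_7_18, g_8_18, g_9_18, g_10_18, g_11_18, g_12_18, g_13_18, g_14_18, g_15_18, g_16_18, g_17_18, g_18_18, g_19_18, vval_0, vval_1, vval_2, vval_3, vval_4, vval_5, vval_6, vval_7, vval_8, vval_9, vval_10, vval_11, vval_12, vval_13, vval_14, vval_15, vval_16, vval_17, vval_18, vval_19]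
  norm_num
private lemma vmv_19 : vecMul v gramN 19 = 0 := by
  rw [show vecMul v gramN 19 = v ⬝ᵥ (fun i => gramN i (19:Fin 20)) from rfl, dot20]
  simp only [g_0_19, g_1_19, g_2_19, g_3_19, g_4_19, g_5_19, g_6_19, g_7_19, g_8_19, g_9_19, g_10_19, g_11_19, g_12_19, g_13_19, g_14_19, g_15_19, g_16_19, g_17_19, g_18_19, g_19_19, vval_0, vval_1, vval_2, vval_3, vval_4, vval_5, vval_6, vval_7, vval_8, vval_9, vval_10, vval_11, vval_12, vval_13, vval_14, vval_15, vval_16, vval_17, vval_18, vval_19]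
  norm_num
private lemma vms_0 : vecMul s3 gramN 0 = 0 := by
  rw [show vecMul s3 gramN 0 = s3 ⬝ᵥ (fun i => gramN i (0:Fin 20)) from rfl, dot20]
  simp only [g_0_0, g_1_0, g_2_0, g_3_0, g_4_0, g_5_0, g_6_0, g_7_0, g_8_0, g_9_0, g_10_0, g_11_0, g_12_0, g_13_0, g_14_0, g_15_0, g_16_0, g_17_0, g_18_0, g_19_0, sval_0, sval_1, sval_2, sval_3, sval_4, sval_5, sval_6, sval_7, sval_8, sval_9, sval_10, sval_11, sval_12, sval_13, sval_14, sval_15, sval_16, sval_17, sval_18, sval_19]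
  norm_num
private lemma vms_1 : vecMul s3 gramN 1 = 0 := by
  rw [show vecMul s3 gramN 1 = s3 ⬝ᵥ (fun i => gramN i (1:Fin 20)) from rfl, dot20]
  simp only [g_0_1, g_1_1, g_2_1, g_3_1, g_4_1, g_5_1, g_6_1, g_7_1, g_8_1, g_9_1, g_10_1, g_11_1, g_12_1, g_13_1, g_14_1, g_15_1, g_16_1, g_17_1, g_18_1, g_19_1, sval_0, sval_1, sval_2, sval_3, sval_4, sval_5, sval_6, sval_7, sval_8, sval_9, sval_10, sval_11, sval_12, sval_13, sval_14, sval_15, sval_16, sval_17, sval_18, sval_19]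
  norm_num
private lemma vms_2 : vecMul s3 gramN 2 = 0 := by
  rw [show vecMul s3 gramN 2 = s3 ⬝ᵥ (fun i => gramN i (2:Fin 20)) from rfl, dot20]
  simp only [g_0_2, g_1_2, g_2_2, g_3_2, g_4_2, g_5_2, g_6_2, g_7_2, g_8_2, g_9_2, g_10_2, g_11_2, g_12_2, g_13_2, g_14_2, g_15_2, g_16_2, g_17_2, g_18_2, g_19_2, sval_0, sval_1, sval_2, sval_3, sval_4, sval_5, sval_6, sval_7, sval_8, sval_9, sval_10, sval_11, sval_12, sval_13, sval_14, sval_15, sval_16, sval_17, sval_18, sval_19]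
  norm_num
private lemma vms_3 : vecMul s3 gramN 3 = 0 := by
  rw [show vecMul s3 gramN 3 = s3 ⬝ᵥ (fun i => gramN i (3:Fin 20)) from rfl, dot20]
  simp only [g_0_3, g_1_3, g_2_3, g_3_3, g_4_3, g_5_3, g_6_3, g_7_3, g_8_3, g_9_3, g_10_3, g_11_3, g_12_3, g_13_3, g_14_3, g_15_3, g_16_3, g_17_3, g_18_3, g_19_3, sval_0, sval_1, sval_2, sval_3, sval_4, sval_5, sval_6, sval_7, sval_8, sval_9, sval_10, sval_11, sval_12, sval_13, sval_14, sval_15, sval_16, sval_17, sval_18, sval_19]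
  norm_num
private lemma vms_4 : vecMul s3 gramN 4 = 0 := by
  rw [show vecMul s3 gramN 4 = s3 ⬝ᵥ (fun i => gramN i (4:Fin 20)) from rfl, dot20]
  simp only [g_0_4, g_1_4, g_2_4, g_3_4, g_4_4, g_5_4, g_6_4, g_7_4, g_8_4, g_9_4, g_10_4, g_11_4, g_12_4, g_13_4, g_14_4, g_15_4, g_16_4, g_17_4, g_18_4, g_19_4, sval_0, sval_1, sval_2, sval_3, sval_4, sval_5, sval_6, sval_7, sval_8, sval_9, sval_10, sval_11, sval_12, sval_13, sval_14, sval_15, sval_16, sval_17, sval_18, sval_19]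
  norm_num
private lemma vms_5 : vecMul s3 gramN 5 = 0 := by
  rw [show vecMul s3 gramN 5 = s3 ⬝ᵥ (fun i => gramN i (5:Fin 20)) from rfl, dot20]
  simp only [g_0_5, g_1_5, g_2_5, g_3_5, g_4_5, g_5_5, g_6_5, g_7_5, g_8_5, g_9_5, g_10_5, g_11_5, g_12_5, g_13_5, g_14_5, g_15_5, g_16_5, g_17_5, g_18_5, g_19_5, sval_0, sval_1, sval_2, sval_3, sval_4, sval_5, sval_6, sval_7, sval_8, sval_9, sval_10, sval_11, sval_12, sval_13, sval_14, sval_15, sval_16, sval_17, sval_18, sval_19]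
  norm_num
private lemma vms_6 : vecMul s3 gramN 6 = 0 := by
  rw [show vecMul s3 gramN 6 = s3 ⬝ᵥ (fun i => gramN i (6:Fin 20)) from rfl, dot20]
  simp only [g_0_6, g_1_6, g_2_6, g_3_6, g_4_6, g_5_6, g_6_6, g_7_6, g_8_6, g_9_6, g_10_6, g_11_6, g_12_6, g_13_6, g_14_6, g_15_6, g_16_6, g_17_6, g_18_6, g_19_6, sval_0, sval_1, sval_2, sval_3, sval_4, sval_5, sval_6, sval_7, sval_8, sval_9, sval_10, sval_11, sval_12, sval_13, sval_14, sval_15, sval_16, sval_17, sval_18, sval_19]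
  norm_num
private lemma vms_7 : vecMul s3 gramN 7 = 0 := by
  rw [show vecMul s3 gramN 7 = s3 ⬝ᵥ (fun i => gramN i (7:Fin 20)) from rfl, dot20]
  simp only [g_0_7, g_1_7, g_2_7, g_3_7, g_4_7, g_5_7, g_6_7, g_7_7, g_8_7, g_9_7, g_10_7, g_11_7, g_12_7, g_13_7, g_14_7, g_15_7, g_16_7, g_17_7, g_18_7, g_19_7, sval_0, sval_1, sval_2, sval_3, sval_4, sval_5, sval_6, sval_7, sval_8, sval_9, sval_10, sval_11, sval_12, sval_13, sval_14, sval_15, sval_16, sval_17, sval_18, sval_19]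
  norm_num
private lemma vms_8 : vecMul s3 gramN 8 = 0 := by
  rw [show vecMul s3 gramN 8 = s3 ⬝ᵥ (fun i => gramN i (8:Fin 20)) from rfl, dot20]
  simp only [g_0_8, g_1_8, g_2_8, g_3_8, g_4_8, g_5_8, g_6_8, g_7_8, g_8_8, g_9_8, g_10_8, g_11_8, g_12_8, g_13_8, g_14_8, g_15_8, g_16_8, g_17_8, g_18_8, g_19_8, sval_0, sval_1, sval_2, sval_3, sval_4, sval_5, sval_6, sval_7, sval_8, sval_9, sval_10, sval_11, sval_12, sval_13, sval_14, sval_15, sval_16, sval_17, sval_18, sval_19]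
  norm_num
private lemma vms_9 : vecMul s3 gramN 9 = 0 := by
  rw [show vecMul s3 gramN 9 = s3 ⬝ᵥ (fun i => gramN i (9:Fin 20)) from rfl, dot20]
  simp only [g_0_9, g_1_9, g_2_9, g_3_9, g_4_9, g_5_9, g_6_9, g_7_9, g_8_9, g_9_9, g_10_9, g_11_9, g_12_9, g_13_9, g_14_9, g_15_9, g_16_9, g_17_9, g_18_9, g_19_9, sval_0, sval_1, sval_2, sval_3, sval_4, sval_5, sval_6, sval_7, sval_8, sval_9, sval_10, sval_11, sval_12, sval_13, sval_14, sval_15, sval_16, sval_17, sval_18, sval_19]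
  norm_num
private lemma vms_10 : vecMul s3 gramN 10 = 0 := by
  rw [show vecMul s3 gramN 10 = s3 ⬝ᵥ (fun i => gramN i (10:Fin 20)) from rfl, dot20]
  simp only [g_0_10, g_1_10, g_2_10, g_3_10, g_4_10, g_5_10, g_6_10, g_7_10, g_8_10, g_9_10, g_10_10, g_11_10, g_12_10, g_13_10, g_14_10, g_15_10, g_16_10, g_17_10, g_18_10, g_19_10, sval_0, sval_1, sval_2, sval_3, sval_4, sval_5, sval_6, sval_7, sval_8, sval_9, sval_10, sval_11, sval_12, sval_13, sval_14, sval_15, sval_16, sval_17, sval_18, sval_19]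
  norm_num
private lemma vms_11 : vecMul s3 gramN 11 = 0 := by
  rw [show vecMul s3 gramN 11 = s3 ⬝ᵥ (fun i => gramN i (11:Fin 20)) from rfl, dot20]
  simp only [g_0_11, g_1_11, g_2_11, g_3_11, g_4_11, g_5_11, g_6_11, g_7_11, g_8_11, g_9_11, g_10_11, g_11_11, g_12_11, g_13_11, g_14_11, g_15_11, g_16_11, g_17_11, g_18_11, g_19_11, sval_0, sval_1, sval_2, sval_3, sval_4, sval_5, sval_6, sval_7, sval_8, sval_9, sval_10, sval_11, sval_12, sval_13, sval_14, sval_15, sval_16, sval_17, sval_18, sval_19]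
  norm_num
private lemma vms_12 : vecMul s3 gramN 12 = 0 := by
  rw [show vecMul s3 gramN 12 = s3 ⬝ᵥ (fun i => gramN i (12:Fin 20)) from rfl, dot20]
  simp only [g_0_12, g_1_12, g_2_12, g_3_12, g_4_12, g_5_12, g_6_12, g_7_12, g_8_12, g_9_12, g_10_12, g_11_12, g_12_12, g_13_12, g_14_12, g_15_12, g_16_12, g_17_12, g_18_12, g_19_12, sval_0, sval_1, sval_2, sval_3, sval_4, sval_5, sval_6, sval_7, sval_8, sval_9, sval_10, sval_11, sval_12, sval_13, sval_14, sval_15, sval_16, sval_17, sval_18, sval_19]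
  norm_num
private lemma vms_13 : vecMul s3 gramN 13 = 0 := by
  rw [show vecMul s3 gramN 13 = s3 ⬝ᵥ (fun i => gramN i (13:Fin 20)) from rfl, dot20]
  simp only [g_0_13, g_1_13, g_2_13, g_3_13, g_4_13, g_5_13, g_6_13, g_7_13, g_8_13, g_9_13, g_10_13, g_11_13, g_12_13, g_13_13, g_14_13, g_15_13, g_16_13, g_17_13, g_18_13, g_19_13, sval_0, sval_1, sval_2, sval_3, sval_4, sval_5, sval_6, sval_7, sval_8, sval_9, sval_10, sval_11, sval_12, sval_13, sval_14, sval_15, sval_16, sval_17, sval_18, sval_19]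
  norm_num
private lemma vms_14 : vecMul s3 gramN 14 = 0 := by
  rw [show vecMul s3 gramN 14 = s3 ⬝ᵥ (fun i => gramN i (14:Fin 20)) from rfl, dot20]
  simp only [g_0_14, g_1_14, g_2_14, g_3_14, g_4_14, g_5_14, g_6_14, g_7_14, g_8_14, g_9_14, g_10_14, g_11_14, g_12_14, g_13_14, g_14_14, g_15_14, g_16_14, g_17_14, g_18_14, g_19_14, sval_0, sval_1, sval_2, sval_3, sval_4, sval_5, sval_6, sval_7, sval_8, sval_9, sval_10, sval_11, sval_12, sval_13, sval_14, sval_15, sval_16, sval_17, sval_18, sval_19]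
  norm_num
private lemma vms_15 : vecMul s3 gramN 15 = 0 := by
  rw [show vecMul s3 gramN 15 = s3 ⬝ᵥ (fun i => gramN i (15:Fin 20)) from rfl, dot20]
  simp only [g_0_15, g_1_15, g_2_15, g_3_15, g_4_15, g_5_15, g_6_15, g_7_15, g_8_15, g_9_15, g_10_15, g_11_15, g_12_15, g_13_15, g_14_15, g_15_15, g_16_15, g_17_15, g_18_15, g_19_15, sval_0, sval_1, sval_2, sval_3, sval_4, sval_5, sval_6, sval_7, sval_8, sval_9, sval_10, sval_11, sval_12, sval_13, sval_14, sval_15, sval_16, sval_17, sval_18, sval_19]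
  norm_num
private lemma vms_16 : vecMul s3 gramN 16 = 0 := by
  rw [show vecMul s3 gramN 16 = s3 ⬝ᵥ (fun i => gramN i (16:Fin 20)) from rfl, dot20]
  simp only [g_0_16, g_1_16, g_2_16, g_3_16, g_4_16, g_5_16, g_6_16, g_7_16, g_8_16, g_9_16, g_10_16, g_11_16, g_12_16, g_13_16, g_14_16, g_15_16, g_16_16, g_17_16, g_18_16, g_19_16, sval_0, sval_1, sval_2, sval_3, sval_4, sval_5, sval_6, sval_7, sval_8, sval_9, sval_10, sval_11, sval_12, sval_13, sval_14, sval_15, sval_16, sval_17, sval_18, sval_19]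
  norm_num
private lemma vms_17 : vecMul s3 gramN 17 = -6 := by
  rw [show vecMul s3 gramN 17 = s3 ⬝ᵥ (fun i => gramN i (17:Fin 20)) from rfl, dot20]
  simp only [g_0_17, g_1_17, g_2_17, g_3_17, g_4_17, g_5_17, g_6_17, g_7_17, g_8_17, g_9_17, g_10_17, g_11_17, g_12_17, g_13_17, g_14_17, g_15_17, g_16_17, g_17_17, g_18_17, g_19_17, sval_0, sval_1, sval_2, sval_3, sval_4, sval_5, sval_6, sval_7, sval_8, sval_9, sval_10, sval_11, sval_12, sval_13, sval_14, sval_15, sval_16, sval_17, sval_18, sval_19]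
  norm_num
private lemma vms_18 : vecMul s3 gramN 18 = 0 := by
  rw [show vecMul s3 gramN 18 = s3 ⬝ᵥ (fun i => gramN i (18:Fin 20)) from rfl, dot20]
  simp only [g_0_18, g_1_18, g_2_18, g_3_18, g_4_18, g_5_18, g_6_18, g_7_18, g_8_18, g_9_18, g_10_18, g_11_18, g_12_18, g_13_18, g_14_18, g_15_18, g_16_18, g_17_18, g_18_18, g_19_18, sval_0, sval_1, sval_2, sval_3, sval_4, sval_5, sval_6, sval_7, sval_8, sval_9, sval_10, sval_11, sval_12, sval_13, sval_14, sval_15, sval_16, sval_17, sval_18, sval_19]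
  norm_num
private lemma vms_19 : vecMul s3 gramN 19 = 0 := by
  rw [show vecMul s3 gramN 19 = s3 ⬝ᵥ (fun i => gramN i (19:Fin 20)) from rfl, dot20]
  simp only [g_0_19, g_1_19, g_2_19, g_3_19, g_4_19, g_5_19, g_6_19, g_7_19, g_8_19, g_9_19, g_10_19, g_11_19, g_12_19, g_13_19, g_14_19, g_15_19, g_16_19, g_17_19, g_18_19, g_19_19, sval_0, sval_1, sval_2, sval_3, sval_4, sval_5, sval_6, sval_7, sval_8, sval_9, sval_10, sval_11, sval_12, sval_13, sval_14, sval_15, sval_16, sval_17, sval_18, sval_19]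
  norm_num
private lemma mvv_0 : gramN.mulVec v 0 = 1 := by
  rw [show gramN.mulVec v 0 = (fun j => gramN (0:Fin 20) j) ⬝ᵥ v from rfl, dot20]
  simp only [g_0_0, g_0_1, g_0_2, g_0_3, g_0_4, g_0_5, g_0_6, g_0_7, g_0_8, g_0_9, g_0_10, g_0_11, g_0_12, g_0_13, g_0_14, g_0_15, g_0_16, g_0_17, g_0_18, g_0_19, vval_0, vval_1, vval_2, vval_3, vval_4, vval_5, vval_6, vval_7, vval_8, vval_9, vval_10, vval_11, vval_12, vval_13, vval_14, vval_15, vval_16, vval_17, vval_18, vval_19]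
  norm_num
private lemma mvv_1 : gramN.mulVec v 1 = 0 := by
  rw [show gramN.mulVec v 1 = (fun j => gramN (1:Fin 20) j) ⬝ᵥ v from rfl, dot20]
  simp only [g_1_0, g_1_1, g_1_2, g_1_3, g_1_4, g_1_5, g_1_6, g_1_7, g_1_8, g_1_9, g_1_10, g_1_11, g_1_12, g_1_13, g_1_14, g_1_15, g_1_16, g_1_17, g_1_18, g_1_19, vval_0, vval_1, vval_2, vval_3, vval_4, vval_5, vval_6, vval_7, vval_8, vval_9, vval_10, vval_11, vval_12, vval_13, vval_14, vval_15, vval_16, vval_17, vval_18, vval_19]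
  norm_num
private lemma mvv_2 : gramN.mulVec v 2 = 0 := by
  rw [show gramN.mulVec v 2 = (fun j => gramN (2:Fin 20) j) ⬝ᵥ v from rfl, dot20]
  simp only [g_2_0, g_2_1, g_2_2, g_2_3, g_2_4, g_2_5, g_2_6, g_2_7, g_2_8, g_2_9, g_2_10, g_2_11, g_2_12, g_2_13, g_2_14, g_2_15, g_2_16, g_2_17, g_2_18, g_2_19, vval_0, vval_1, vval_2, vval_3, vval_4, vval_5, vval_6, vval_7, vval_8, vval_9, vval_10, vval_11, vval_12, vval_13, vval_14, vval_15, vval_16, vval_17, vval_18, vval_19]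
  norm_num
private lemma mvv_3 : gramN.mulVec v 3 = 0 := by
  rw [show gramN.mulVec v 3 = (fun j => gramN (3:Fin 20) j) ⬝ᵥ v from rfl, dot20]
  simp only [g_3_0, g_3_1, g_3_2, g_3_3, g_3_4, g_3_5, g_3_6, g_3_7, g_3_8, g_3_9, g_3_10, g_3_11, g_3_12, g_3_13, g_3_14, g_3_15, g_3_16, g_3_17, g_3_18, g_3_19, vval_0, vval_1, vval_2, vval_3, vval_4, vval_5, vval_6, vval_7, vval_8, vval_9, vval_10, vval_11, vval_12, vval_13, vval_14, vval_15, vval_16, vval_17, vval_18, vval_19]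
  norm_num
private lemma mvv_4 : gramN.mulVec v 4 = 0 := by
  rw [show gramN.mulVec v 4 = (fun j => gramN (4:Fin 20) j) ⬝ᵥ v from rfl, dot20]
  simp only [g_4_0, g_4_1, g_4_2, g_4_3, g_4_4, g_4_5, g_4_6, g_4_7, g_4_8, g_4_9, g_4_10, g_4_11, g_4_12, g_4_13, g_4_14, g_4_15, g_4_16, g_4_17, g_4_18, g_4_19, vval_0, vval_1, vval_2, vval_3, vval_4, vval_5, vval_6, vval_7, vval_8, vval_9, vval_10, vval_11, vval_12, vval_13, vval_14, vval_15, vval_16, vval_17, vval_18, vval_19]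
  norm_num
private lemma mvv_5 : gramN.mulVec v 5 = 0 := by
  rw [show gramN.mulVec v 5 = (fun j => gramN (5:Fin 20) j) ⬝ᵥ v from rfl, dot20]
  simp only [g_5_0, g_5_1, g_5_2, g_5_3, g_5_4, g_5_5, g_5_6, g_5_7, g_5_8, g_5_9, g_5_10, g_5_11, g_5_12, g_5_13, g_5_14, g_5_15, g_5_16, g_5_17, g_5_18, g_5_19, vval_0, vval_1, vval_2, vval_3, vval_4, vval_5, vval_6, vval_7, vval_8, vval_9, vval_10, vval_11, vval_12, vval_13, vval_14, vval_15, vval_16, vval_17, vval_18, vval_19]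
  norm_num
private lemma mvv_6 : gramN.mulVec v 6 = 0 := by
  rw [show gramN.mulVec v 6 = (fun j => gramN (6:Fin 20) j) ⬝ᵥ v from rfl, dot20]
  simp only [g_6_0, g_6_1, g_6_2, g_6_3, g_6_4, g_6_5, g_6_6, g_6_7, g_6_8, g_6_9, g_6_10, g_6_11, g_6_12, g_6_13, g_6_14, g_6_15, g_6_16, g_6_17, g_6_18, g_6_19, vval_0, vval_1, vval_2, vval_3, vval_4, vval_5, vval_6, vval_7, vval_8, vval_9, vval_10, vval_11, vval_12, vval_13, vval_14, vval_15, vval_16, vval_17, vval_18, vval_19]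
  norm_num
private lemma mvv_7 : gramN.mulVec v 7 = 0 := by
  rw [show gramN.mulVec v 7 = (fun j => gramN (7:Fin 20) j) ⬝ᵥ v from rfl, dot20]
  simp only [g_7_0, g_7_1, g_7_2, g_7_3, g_7_4, g_7_5, g_7_6, g_7_7, g_7_8, g_7_9, g_7_10, g_7_11, g_7_12, g_7_13, g_7_14, g_7_15, g_7_16, g_7_17, g_7_18, g_7_19, vval_0, vval_1, vval_2, vval_3, vval_4, vval_5, vval_6, vval_7, vval_8, vval_9, vval_10, vval_11, vval_12, vval_13, vval_14, vval_15, vval_16, vval_17, vval_18, vval_19]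
  norm_num
private lemma mvv_8 : gramN.mulVec v 8 = 0 := by
  rw [show gramN.mulVec v 8 = (fun j => gramN (8:Fin 20) j) ⬝ᵥ v from rfl, dot20]
  simp only [g_8_0, g_8_1, g_8_2, g_8_3, g_8_4, g_8_5, g_8_6, g_8_7, g_8_8, g_8_9, g_8_10, g_8_11, g_8_12, g_8_13, g_8_14, g_8_15, g_8_16, g_8_17, g_8_18, g_8_19, vval_0, vval_1, vval_2, vval_3, vval_4, vval_5, vval_6, vval_7, vval_8, vval_9, vval_10, vval_11, vval_12, vval_13, vval_14, vval_15, vval_16, vval_17, vval_18, vval_19]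
  norm_num
private lemma mvv_9 : gramN.mulVec v 9 = 0 := by
  rw [show gramN.mulVec v 9 = (fun j => gramN (9:Fin 20) j) ⬝ᵥ v from rfl, dot20]
  simp only [g_9_0, g_9_1, g_9_2, g_9_3, g_9_4, g_9_5, g_9_6, g_9_7, g_9_8, g_9_9, g_9_10, g_9_11, g_9_12, g_9_13, g_9_14, g_9_15, g_9_16, g_9_17, g_9_18, g_9_19, vval_0, vval_1, vval_2, vval_3, vval_4, vval_5, vval_6, vval_7, vval_8, vval_9, vval_10, vval_11, vval_12, vval_13, vval_14, vval_15, vval_16, vval_17, vval_18, vval_19]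
  norm_num
private lemma mvv_10 : gramN.mulVec v 10 = 0 := by
  rw [show gramN.mulVec v 10 = (fun j => gramN (10:Fin 20) j) ⬝ᵥ v from rfl, dot20]
  simp only [g_10_0, g_10_1, g_10_2, g_10_3, g_10_4, g_10_5, g_10_6, g_10_7, g_10_8, g_10_9, g_10_10, g_10_11, g_10_12, g_10_13, g_10_14, g_10_15, g_10_16, g_10_17, g_10_18, g_10_19, vval_0, vval_1, vval_2, vval_3, vval_4, vval_5, vval_6, vval_7, vval_8, vval_9, vval_10, vval_11, vval_12, vval_13, vval_14, vval_15, vval_16, vval_17, vval_18, vval_19]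
  norm_num
private lemma mvv_11 : gramN.mulVec v 11 = 0 := by
  rw [show gramN.mulVec v 11 = (fun j => gramN (11:Fin 20) j) ⬝ᵥ v from rfl, dot20]
  simp only [g_11_0, g_11_1, g_11_2, g_11_3, g_11_4, g_11_5, g_11_6, g_11_7, g_11_8, g_11_9, g_11_10, g_11_11, g_11_12, g_11_13, g_11_14, g_11_15, g_11_16, g_11_17, g_11_18, g_11_19, vval_0, vval_1, vval_2, vval_3, vval_4, vval_5, vval_6, vval_7, vval_8, vval_9, vval_10, vval_11, vval_12, vval_13, vval_14, vval_15, vval_16, vval_17, vval_18, vval_19]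
  norm_num
private lemma mvv_12 : gramN.mulVec v 12 = 0 := by
  rw [show gramN.mulVec v 12 = (fun j => gramN (12:Fin 20) j) ⬝ᵥ v from rfl, dot20]
  simp only [g_12_0, g_12_1, g_12_2, g_12_3, g_12_4, g_12_5, g_12_6, g_12_7, g_12_8, g_12_9, g_12_10, g_12_11, g_12_12, g_12_13, g_12_14, g_12_15, g_12_16, g_12_17, g_12_18, g_12_19, vval_0, vval_1, vval_2, vval_3, vval_4, vval_5, vval_6, vval_7, vval_8, vval_9, vval_10, vval_11, vval_12, vval_13, vval_14, vval_15, vval_16, vval_17, vval_18, vval_19]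
  norm_num
private lemma mvv_13 : gramN.mulVec v 13 = 0 := by
  rw [show gramN.mulVec v 13 = (fun j => gramN (13:Fin 20) j) ⬝ᵥ v from rfl, dot20]
  simp only [g_13_0, g_13_1, g_13_2, g_13_3, g_13_4, g_13_5, g_13_6, g_13_7, g_13_8, g_13_9, g_13_10, g_13_11, g_13_12, g_13_13, g_13_14, g_13_15, g_13_16, g_13_17, g_13_18, g_13_19, vval_0, vval_1, vval_2, vval_3, vval_4, vval_5, vval_6, vval_7, vval_8, vval_9, vval_10, vval_11, vval_12, vval_13, vval_14, vval_15, vval_16, vval_17, vval_18, vval_19]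
  norm_num
private lemma mvv_14 : gramN.mulVec v 14 = 0 := by
  rw [show gramN.mulVec v 14 = (fun j => gramN (14:Fin 20) j) ⬝ᵥ v from rfl, dot20]
  simp only [g_14_0, g_14_1, g_14_2, g_14_3, g_14_4, g_14_5, g_14_6, g_14_7, g_14_8, g_14_9, g_14_10, g_14_11, g_14_12, g_14_13, g_14_14, g_14_15, g_14_16, g_14_17, g_14_18, g_14_19, vval_0, vval_1, vval_2, vval_3, vval_4, vval_5, vval_6, vval_7, vval_8, vval_9, vval_10, vval_11, vval_12, vval_13, vval_14, vval_15, vval_16, vval_17, vval_18, vval_19]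
  norm_num
private lemma mvv_15 : gramN.mulVec v 15 = 0 := by
  rw [show gramN.mulVec v 15 = (fun j => gramN (15:Fin 20) j) ⬝ᵥ v from rfl, dot20]
  simp only [g_15_0, g_15_1, g_15_2, g_15_3, g_15_4, g_15_5, g_15_6, g_15_7, g_15_8, g_15_9, g_15_10, g_15_11, g_15_12, g_15_13, g_15_14, g_15_15, g_15_16, g_15_17, g_15_18, g_15_19, vval_0, vval_1, vval_2, vval_3, vval_4, vval_5, vval_6, vval_7, vval_8, vval_9, vval_10, vval_11, vval_12, vval_13, vval_14, vval_15, vval_16, vval_17, vval_18, vval_19]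
  norm_num
private lemma mvv_16 : gramN.mulVec v 16 = 0 := by
  rw [show gramN.mulVec v 16 = (fun j => gramN (16:Fin 20) j) ⬝ᵥ v from rfl, dot20]
  simp only [g_16_0, g_16_1, g_16_2, g_16_3, g_16_4, g_16_5, g_16_6, g_16_7, g_16_8, g_16_9, g_16_10, g_16_11, g_16_12, g_16_13, g_16_14, g_16_15, g_16_16, g_16_17, g_16_18, g_16_19, vval_0, vval_1, vval_2, vval_3, vval_4, vval_5, vval_6, vval_7, vval_8, vval_9, vval_10, vval_11, vval_12, vval_13, vval_14, vval_15, vval_16, vval_17, vval_18, vval_19]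
  norm_num
private lemma mvv_17 : gramN.mulVec v 17 = -3 := by
  rw [show gramN.mulVec v 17 = (fun j => gramN (17:Fin 20) j) ⬝ᵥ v from rfl, dot20]
  simp only [g_17_0, g_17_1, g_17_2, g_17_3, g_17_4, g_17_5, g_17_6, g_17_7, g_17_8, g_17_9, g_17_10, g_17_11, g_17_12, g_17_13, g_17_14, g_17_15, g_17_16, g_17_17, g_17_18, g_17_19, vval_0, vval_1, vval_2, vval_3, vval_4, vval_5, vval_6, vval_7, vval_8, vval_9, vval_10, vval_11, vval_12, vval_13, vval_14, vval_15, vval_16, vval_17, vval_18, vval_19]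
  norm_num
private lemma mvv_18 : gramN.mulVec v 18 = 0 := by
  rw [show gramN.mulVec v 18 = (fun j => gramN (18:Fin 20) j) ⬝ᵥ v from rfl, dot20]
  simp only [g_18_0, g_18_1, g_18_2, g_18_3, g_18_4, g_18_5, g_18_6, g_18_7, g_18_8, g_18_9, g_18_10, g_18_11, g_18_12, g_18_13, g_18_14, g_18_15, g_18_16, g_18_17, g_18_18, g_18_19, vval_0, vval_1, vval_2, vval_3, vval_4, vval_5, vval_6, vval_7, vval_8, vval_9, vval_10, vval_11, vval_12, vval_13, vval_14, vval_15, vval_16, vval_17, vval_18, vval_19]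
  norm_num
private lemma mvv_19 : gramN.mulVec v 19 = 0 := by
  rw [show gramN.mulVec v 19 = (fun j => gramN (19:Fin 20) j) ⬝ᵥ v from rfl, dot20]
  simp only [g_19_0, g_19_1, g_19_2, g_19_3, g_19_4, g_19_5, g_19_6, g_19_7, g_19_8, g_19_9, g_19_10, g_19_11, g_19_12, g_19_13, g_19_14, g_19_15, g_19_16, g_19_17, g_19_18, g_19_19, vval_0, vval_1, vval_2, vval_3, vval_4, vval_5, vval_6, vval_7, vval_8, vval_9, vval_10, vval_11, vval_12, vval_13, vval_14, vval_15, vval_16, vval_17, vval_18, vval_19]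
  norm_num

private lemma form_u' (w : Fin 20 → ℚ) : form u w = w 0 - 9 * w 17 := by
  rw [form, Matrix.dotProduct_mulVec, dot20]
  simp only [vmu_0, vmu_1, vmu_2, vmu_3, vmu_4, vmu_5, vmu_6, vmu_7, vmu_8, vmu_9, vmu_10, vmu_11, vmu_12, vmu_13, vmu_14, vmu_15, vmu_16, vmu_17, vmu_18, vmu_19]
  ring

private lemma form_v' (w : Fin 20 → ℚ) : form v w = w 0 - 3 * w 17 := by
  rw [form, Matrix.dotProduct_mulVec, dot20]
  simp only [vmv_0, vmv_1, vmv_2, vmv_3, vmv_4, vmv_5, vmv_6, vmv_7, vmv_8, vmv_9, vmv_10, vmv_11, vmv_12, vmv_13, vmv_14, vmv_15, vmv_16, vmv_17, vmv_18, vmv_19]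
  ring

private lemma form_s3' (w : Fin 20 → ℚ) : form s3 w = -6 * w 17 := by
  rw [form, Matrix.dotProduct_mulVec, dot20]
  simp only [vms_0, vms_1, vms_2, vms_3, vms_4, vms_5, vms_6, vms_7, vms_8, vms_9, vms_10, vms_11, vms_12, vms_13, vms_14, vms_15, vms_16, vms_17, vms_18, vms_19]
  ring

private lemma form_right_v (x : Fin 20 → ℚ) : form x v = x 0 - 3 * x 17 := by
  rw [form, dot20]
  simp only [mvv_0, mvv_1, mvv_2, mvv_3, mvv_4, mvv_5, mvv_6, mvv_7, mvv_8, mvv_9, mvv_10, mvv_11, mvv_12, mvv_13, mvv_14, mvv_15, mvv_16, mvv_17, mvv_18, mvv_19]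
  ring

private lemma col0 (x : Fin 20 → ℚ) : form x (Pi.single (0 : Fin 20) 1) = 2 * x 0 := by
  rw [form, Matrix.mulVec_single_one, dot20]
  simp only [Matrix.col_apply, g_0_0, g_1_0, g_2_0, g_3_0, g_4_0, g_5_0, g_6_0, g_7_0, g_8_0, g_9_0, g_10_0, g_11_0, g_12_0, g_13_0, g_14_0, g_15_0, g_16_0, g_17_0, g_18_0, g_19_0]
  ring
private lemma col1 (x : Fin 20 → ℚ) : form x (Pi.single (1 : Fin 20) 1) = -2 * x 1 + x 2 := by
  rw [form, Matrix.mulVec_single_one, dot20]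
  simp only [Matrix.col_apply, g_0_1, g_1_1, g_2_1, g_3_1, g_4_1, g_5_1, g_6_1, g_7_1, g_8_1, g_9_1, g_10_1, g_11_1, g_12_1, g_13_1, g_14_1, g_15_1, g_16_1, g_17_1, g_18_1, g_19_1]
  ring
private lemma col2 (x : Fin 20 → ℚ) : form x (Pi.single (2 : Fin 20) 1) = x 1 - 2 * x 2 + x 3 := by
  rw [form, Matrix.mulVec_single_one, dot20]
  simp only [Matrix.col_apply, g_0_2, g_1_2, g_2_2, g_3_2, g_4_2, g_5_2, g_6_2, g_7_2, g_8_2, g_9_2, g_10_2, g_11_2, g_12_2, g_13_2, g_14_2, g_15_2, g_16_2, g_17_2, g_18_2, g_19_2]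
  ring
private lemma col3 (x : Fin 20 → ℚ) : form x (Pi.single (3 : Fin 20) 1) = x 2 - 2 * x 3 + x 4 := by
  rw [form, Matrix.mulVec_single_one, dot20]
  simp only [Matrix.col_apply, g_0_3, g_1_3, g_2_3, g_3_3, g_4_3, g_5_3, g_6_3, g_7_3, g_8_3, g_9_3, g_10_3, g_11_3, g_12_3, g_13_3, g_14_3, g_15_3, g_16_3, g_17_3, g_18_3, g_19_3]
  ring
private lemma col4 (x : Fin 20 → ℚ) : form x (Pi.single (4 : Fin 20) 1) = x 3 - 2 * x 4 + x 5 := by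
  rw [form, Matrix.mulVec_single_one, dot20]
  simp only [Matrix.col_apply, g_0_4, g_1_4, g_2_4, g_3_4, g_4_4, g_5_4, g_6_4, g_7_4, g_8_4, g_9_4, g_10_4, g_11_4, g_12_4, g_13_4, g_14_4, g_15_4, g_16_4, g_17_4, g_18_4, g_19_4]
  ring
private lemma col5 (x : Fin 20 → ℚ) : form x (Pi.single (5 : Fin 20) 1) = x 4 - 2 * x 5 + x 6 := by
  rw [form, Matrix.mulVec_single_one, dot20]
  simp only [Matrix.col_apply, g_0_5, g_1_5, g_2_5, g_3_5, g_4_5, g_5_5, g_6_5, g_7_5, g_8_5, g_9_5, g_10_5, g_11_5, g_12_5, g_13_5, g_14_5, g_15_5, g_16_5, g_17_5, g_18_5, g_19_5]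
  ring
private lemma col6 (x : Fin 20 → ℚ) : form x (Pi.single (6 : Fin 20) 1) = x 5 - 2 * x 6 + x 7 := by
  rw [form, Matrix.mulVec_single_one, dot20]
  simp only [Matrix.col_apply, g_0_6, g_1_6, g_2_6, g_3_6, g_4_6, g_5_6, g_6_6, g_7_6, g_8_6, g_9_6, g_10_6, g_11_6, g_12_6, g_13_6, g_14_6, g_15_6, g_16_6, g_17_6, g_18_6, g_19_6]
  ring
private lemma col7 (x : Fin 20 → ℚ) : form x (Pi.single (7 : Fin 20) 1) = x 6 - 2 * x 7 + x 8 := by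
  rw [form, Matrix.mulVec_single_one, dot20]
  simp only [Matrix.col_apply, g_0_7, g_1_7, g_2_7, g_3_7, g_4_7, g_5_7, g_6_7, g_7_7, g_8_7, g_9_7, g_10_7, g_11_7, g_12_7, g_13_7, g_14_7, g_15_7, g_16_7, g_17_7, g_18_7, g_19_7]
  ring
private lemma col8 (x : Fin 20 → ℚ) : form x (Pi.single (8 : Fin 20) 1) = x 7 - 2 * x 8 + x 9 := by
  rw [form, Matrix.mulVec_single_one, dot20]
  simp only [Matrix.col_apply, g_0_8, g_1_8, g_2_8, g_3_8, g_4_8, g_5_8, g_6_8, g_7_8, g_8_8, g_9_8, g_10_8, g_11_8, g_12_8, g_13_8, g_14_8, g_15_8, g_16_8, g_17_8, g_18_8, g_19_8]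
  ring
private lemma col9 (x : Fin 20 → ℚ) : form x (Pi.single (9 : Fin 20) 1) = x 8 - 2 * x 9 + x 10 := by
  rw [form, Matrix.mulVec_single_one, dot20]
  simp only [Matrix.col_apply, g_0_9, g_1_9, g_2_9, g_3_9, g_4_9, g_5_9, g_6_9, g_7_9, g_8_9, g_9_9, g_10_9, g_11_9, g_12_9, g_13_9, g_14_9, g_15_9, g_16_9, g_17_9, g_18_9, g_19_9]
  ring
private lemma col10 (x : Fin 20 → ℚ) : form x (Pi.single (10 : Fin 20) 1) = x 9 - 2 * x 10 + x 11 := by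
  rw [form, Matrix.mulVec_single_one, dot20]
  simp only [Matrix.col_apply, g_0_10, g_1_10, g_2_10, g_3_10, g_4_10, g_5_10, g_6_10, g_7_10, g_8_10, g_9_10, g_10_10, g_11_10, g_12_10, g_13_10, g_14_10, g_15_10, g_16_10, g_17_10, g_18_10, g_19_10]
  ring
private lemma col11 (x : Fin 20 → ℚ) : form x (Pi.single (11 : Fin 20) 1) = x 10 - 2 * x 11 + x 12 := by
  rw [form, Matrix.mulVec_single_one, dot20]
  simp only [Matrix.col_apply, g_0_11, g_1_11, g_2_11, g_3_11, g_4_11, g_5_11, g_6_11, g_7_11, g_8_11, g_9_11, g_10_11, g_11_11, g_12_11, g_13_11, g_14_11, g_15_11, g_16_11, g_17_11, g_18_11, g_19_11]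
  ring
private lemma col12 (x : Fin 20 → ℚ) : form x (Pi.single (12 : Fin 20) 1) = x 11 - 2 * x 12 + x 13 := by
  rw [form, Matrix.mulVec_single_one, dot20]
  simp only [Matrix.col_apply, g_0_12, g_1_12, g_2_12, g_3_12, g_4_12, g_5_12, g_6_12, g_7_12, g_8_12, g_9_12, g_10_12, g_11_12, g_12_12, g_13_12, g_14_12, g_15_12, g_16_12, g_17_12, g_18_12, g_19_12]
  ring
private lemma col13 (x : Fin 20 → ℚ) : form x (Pi.single (13 : Fin 20) 1) = x 12 - 2 * x 13 + x 14 := by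
  rw [form, Matrix.mulVec_single_one, dot20]
  simp only [Matrix.col_apply, g_0_13, g_1_13, g_2_13, g_3_13, g_4_13, g_5_13, g_6_13, g_7_13, g_8_13, g_9_13, g_10_13, g_11_13, g_12_13, g_13_13, g_14_13, g_15_13, g_16_13, g_17_13, g_18_13, g_19_13]
  ring
private lemma col14 (x : Fin 20 → ℚ) : form x (Pi.single (14 : Fin 20) 1) = x 13 - 2 * x 14 + x 15 := by
  rw [form, Matrix.mulVec_single_one, dot20]
  simp only [Matrix.col_apply, g_0_14, g_1_14, g_2_14, g_3_14, g_4_14, g_5_14, g_6_14, g_7_14, g_8_14, g_9_14, g_10_14, g_11_14, g_12_14, g_13_14, g_14_14, g_15_14, g_16_14, g_17_14, g_18_14, g_19_14]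
  ring
private lemma col15 (x : Fin 20 → ℚ) : form x (Pi.single (15 : Fin 20) 1) = x 14 - 2 * x 15 + x 16 := by
  rw [form, Matrix.mulVec_single_one, dot20]
  simp only [Matrix.col_apply, g_0_15, g_1_15, g_2_15, g_3_15, g_4_15, g_5_15, g_6_15, g_7_15, g_8_15, g_9_15, g_10_15, g_11_15, g_12_15, g_13_15, g_14_15, g_15_15, g_16_15, g_17_15, g_18_15, g_19_15]
  ring
private lemma col16 (x : Fin 20 → ℚ) : form x (Pi.single (16 : Fin 20) 1) = x 15 - 2 * x 16 + x 17 := by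
  rw [form, Matrix.mulVec_single_one, dot20]
  simp only [Matrix.col_apply, g_0_16, g_1_16, g_2_16, g_3_16, g_4_16, g_5_16, g_6_16, g_7_16, g_8_16, g_9_16, g_10_16, g_11_16, g_12_16, g_13_16, g_14_16, g_15_16, g_16_16, g_17_16, g_18_16, g_19_16]
  ring
private lemma col17 (x : Fin 20 → ℚ) : form x (Pi.single (17 : Fin 20) 1) = x 16 - 2 * x 17 := by
  rw [form, Matrix.mulVec_single_one, dot20]
  simp only [Matrix.col_apply, g_0_17, g_1_17, g_2_17, g_3_17, g_4_17, g_5_17, g_6_17, g_7_17, g_8_17, g_9_17, g_10_17, g_11_17, g_12_17, g_13_17, g_14_17, g_15_17, g_16_17, g_17_17, g_18_17, g_19_17]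
  ring
private lemma col18 (x : Fin 20 → ℚ) : form x (Pi.single (18 : Fin 20) 1) = -2 * x 18 := by
  rw [form, Matrix.mulVec_single_one, dot20]
  simp only [Matrix.col_apply, g_0_18, g_1_18, g_2_18, g_3_18, g_4_18, g_5_18, g_6_18, g_7_18, g_8_18, g_9_18, g_10_18, g_11_18, g_12_18, g_13_18, g_14_18, g_15_18, g_16_18, g_17_18, g_18_18, g_19_18]
  ring
private lemma col19 (x : Fin 20 → ℚ) : form x (Pi.single (19 : Fin 20) 1) = -2 * x 19 := by
  rw [form, Matrix.mulVec_single_one, dot20]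
  simp only [Matrix.col_apply, g_0_19, g_1_19, g_2_19, g_3_19, g_4_19, g_5_19, g_6_19, g_7_19, g_8_19, g_9_19, g_10_19, g_11_19, g_12_19, g_13_19, g_14_19, g_15_19, g_16_19, g_17_19, g_18_19, g_19_19]
  ring

private lemma single_mem (k : Fin 20) : Pi.single k (1:ℚ) ∈ IntLat := by
  intro i
  refine ⟨if i = k then 1 else 0, ?_⟩
  rw [Pi.single_apply]
  split <;> simp

private lemma mem_Mu {x : Fin 20 → ℚ} : x ∈ Mu ↔ ∃ w ∈ IntLat, ∃ n : ℤ, x = w + n • u := by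
  constructor
  · intro hx
    obtain ⟨w, hw, z, hz, rfl⟩ := AddSubgroup.mem_sup.mp hx
    obtain ⟨n, rfl⟩ := AddSubgroup.mem_zmultiples_iff.mp hz
    exact ⟨w, hw, n, rfl⟩
  · rintro ⟨w, hw, n, rfl⟩
    exact AddSubgroup.mem_sup.mpr ⟨w, hw, n • u, AddSubgroup.mem_zmultiples_iff.mpr ⟨n, rfl⟩, rfl⟩

private lemma mem_Mv {x : Fin 20 → ℚ} : x ∈ Mv ↔ ∃ w ∈ IntLat, ∃ n : ℤ, x = w + n • v := by
  constructor
  · intro hx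
    obtain ⟨w, hw, z, hz, rfl⟩ := AddSubgroup.mem_sup.mp hx
    obtain ⟨n, rfl⟩ := AddSubgroup.mem_zmultiples_iff.mp hz
    exact ⟨w, hw, n, rfl⟩
  · rintro ⟨w, hw, n, rfl⟩
    exact AddSubgroup.mem_sup.mpr ⟨w, hw, n • v, AddSubgroup.mem_zmultiples_iff.mpr ⟨n, rfl⟩, rfl⟩

private lemma smul_apply' (n : ℤ) (w : Fin 20 → ℚ) (i : Fin 20) : (n • w) i = (n : ℚ) * w i := by
  simp [zsmul_eq_mul]

private lemma two_u (i : Fin 20) : ∃ k : ℤ, 2 * u i = (k : ℚ) := by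
  unfold u; split_ifs with h1 h2
  · exact ⟨1, by norm_num⟩
  · exact ⟨i.val, by push_cast; ring⟩
  · exact ⟨0, by norm_num⟩

private lemma six_v (i : Fin 20) : ∃ k : ℤ, 6 * v i = (k : ℚ) := by
  unfold v; split_ifs with h1 h2
  · exact ⟨3, by norm_num⟩
  · exact ⟨i.val, by push_cast; ring⟩
  · exact ⟨0, by norm_num⟩

private lemma three_s3 (i : Fin 20) : ∃ k : ℤ, 3 * s3 i = (k : ℚ) := by
  unfold s3; split_ifs with h1 h2
  · exact ⟨0, by norm_num⟩
  · exact ⟨i.val, by push_cast; ring⟩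
  · exact ⟨0, by norm_num⟩

private lemma zsmul_u_mem (n m : ℤ) (h : n = 2 * m) : n • u ∈ IntLat := by
  intro i
  obtain ⟨k, hk⟩ := two_u i
  refine ⟨m * k, ?_⟩
  rw [smul_apply', h]
  push_cast
  linear_combination (m : ℚ) * hk

private lemma zsmul_v_mem (n m : ℤ) (h : n = 6 * m) : n • v ∈ IntLat := by
  intro i
  obtain ⟨k, hk⟩ := six_v i
  refine ⟨m * k, ?_⟩
  rw [smul_apply', h]
  push_cast
  linear_combination (m : ℚ) * hk

private lemma two_x0 (x : Fin 20 → ℚ) (hx : x ∈ Mu) : ∃ k : ℤ, (2:ℚ) * x 0 = (k : ℚ) := by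
  obtain ⟨w, hw, n, rfl⟩ := mem_Mu.mp hx
  obtain ⟨a, ha⟩ := hw 0
  refine ⟨2 * a + n, ?_⟩
  rw [Pi.add_apply, smul_apply', uval_0, ha]
  push_cast; ring

private lemma six_x1 (x : Fin 20 → ℚ) (hx : x ∈ Mv) : ∃ k : ℤ, (6:ℚ) * x 1 = (k : ℚ) := by
  obtain ⟨w, hw, n, rfl⟩ := mem_Mv.mp hx
  obtain ⟨a, ha⟩ := hw 1
  refine ⟨6 * a + n, ?_⟩
  rw [Pi.add_apply, smul_apply', vval_1, ha]
  push_cast; ring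

noncomputable def phiU : Mu →+ ZMod 2 where
  toFun x := (((2:ℚ) * x.1 0).num : ZMod 2)
  map_zero' := by norm_num
  map_add' x y := by
    obtain ⟨p, hp⟩ := two_x0 x.1 x.2
    obtain ⟨q, hq⟩ := two_x0 y.1 y.2
    have hpq : (2:ℚ) * (x + y).1 0 = ((p + q : ℤ) : ℚ) := by
      have e : (x + y).1 0 = x.1 0 + y.1 0 := rfl
      rw [e]; push_cast; linarith
    show (((2:ℚ) * (x + y).1 0).num : ZMod 2) = (((2:ℚ) * x.1 0).num : ZMod 2) + (((2:ℚ) * y.1 0).num : ZMod 2)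
    rw [hpq, hp, hq, Rat.num_intCast, Rat.num_intCast, Rat.num_intCast]
    push_cast; ring

noncomputable def phiV : Mv →+ ZMod 6 where
  toFun x := (((6:ℚ) * x.1 1).num : ZMod 6)
  map_zero' := by norm_num
  map_add' x y := by
    obtain ⟨p, hp⟩ := six_x1 x.1 x.2
    obtain ⟨q, hq⟩ := six_x1 y.1 y.2
    have hpq : (6:ℚ) * (x + y).1 1 = ((p + q : ℤ) : ℚ) := by
      have e : (x + y).1 1 = x.1 1 + y.1 1 := rfl
      rw [e]; push_cast; linarith
    show (((6:ℚ) * (x + y).1 1).num : ZMod 6) = (((6:ℚ) * x.1 1).num : ZMod 6) + (((6:ℚ) * y.1 1).num : ZMod 6)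
    rw [hpq, hp, hq, Rat.num_intCast, Rat.num_intCast, Rat.num_intCast]
    push_cast; ring

private lemma uMu : u ∈ Mu :=
  AddSubgroup.mem_sup_right (AddSubgroup.mem_zmultiples u)

private lemma vMv : v ∈ Mv :=
  AddSubgroup.mem_sup_right (AddSubgroup.mem_zmultiples v)

private lemma ker_phiU : phiU.ker = IntLat.addSubgroupOf Mu := by
  ext x
  rw [AddMonoidHom.mem_ker, AddSubgroup.mem_addSubgroupOf]
  constructor
  · intro h
    obtain ⟨w, hw, n, hxe⟩ := mem_Mu.mp x.2
    obtain ⟨a, ha⟩ := hw 0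
    have h20 : (2:ℚ) * x.1 0 = ((2 * a + n : ℤ) : ℚ) := by
      rw [hxe, Pi.add_apply, smul_apply', uval_0, ha]; push_cast; ring
    rw [show phiU x = (((2:ℚ) * x.1 0).num : ZMod 2) from rfl, h20, Rat.num_intCast] at h
    have hdvd : (2:ℤ) ∣ 2 * a + n := (ZMod.intCast_zmod_eq_zero_iff_dvd _ 2).mp h
    obtain ⟨m, hm⟩ : ∃ m : ℤ, n = 2 * m := by
      obtain ⟨t, ht⟩ := hdvd; exact ⟨t - a, by omega⟩
    rw [hxe]
    exact IntLat.add_mem hw (zsmul_u_mem n m hm)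
  · intro h
    obtain ⟨a, ha⟩ := h 0
    have e : (2:ℚ) * x.1 0 = ((2 * a : ℤ) : ℚ) := by rw [ha]; push_cast; ring
    rw [show phiU x = (((2:ℚ) * x.1 0).num : ZMod 2) from rfl, e, Rat.num_intCast]
    exact (ZMod.intCast_zmod_eq_zero_iff_dvd _ 2).mpr ⟨a, rfl⟩

private lemma ker_phiV : phiV.ker = IntLat.addSubgroupOf Mv := by
  ext x
  rw [AddMonoidHom.mem_ker, AddSubgroup.mem_addSubgroupOf]
  constructor
  · intro h
    obtain ⟨w, hw, n, hxe⟩ := mem_Mv.mp x.2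
    obtain ⟨a, ha⟩ := hw 1
    have h61 : (6:ℚ) * x.1 1 = ((6 * a + n : ℤ) : ℚ) := by
      rw [hxe, Pi.add_apply, smul_apply', vval_1, ha]; push_cast; ring
    rw [show phiV x = (((6:ℚ) * x.1 1).num : ZMod 6) from rfl, h61, Rat.num_intCast] at h
    have hdvd : (6:ℤ) ∣ 6 * a + n := (ZMod.intCast_zmod_eq_zero_iff_dvd _ 6).mp h
    obtain ⟨m, hm⟩ : ∃ m : ℤ, n = 6 * m := by
      obtain ⟨t, ht⟩ := hdvd; exact ⟨t - a, by omega⟩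
    rw [hxe]
    exact IntLat.add_mem hw (zsmul_v_mem n m hm)
  · intro h
    obtain ⟨a, ha⟩ := h 1
    have e : (6:ℚ) * x.1 1 = ((6 * a : ℤ) : ℚ) := by rw [ha]; push_cast; ring
    rw [show phiV x = (((6:ℚ) * x.1 1).num : ZMod 6) from rfl, e, Rat.num_intCast]
    exact (ZMod.intCast_zmod_eq_zero_iff_dvd _ 6).mpr ⟨a, rfl⟩

private lemma surj_phiU : Function.Surjective phiU := by
  have h1 : phiU ⟨u, uMu⟩ = 1 := by
    rw [show phiU ⟨u, uMu⟩ = (((2:ℚ) * u 0).num : ZMod 2) from rfl, uval_0]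
    norm_num
  intro c
  refine ⟨(c.val : ℤ) • ⟨u, uMu⟩, ?_⟩
  rw [map_zsmul, h1, zsmul_eq_mul, mul_one]
  simp [ZMod.intCast_cast, ZMod.natCast_val]

private lemma surj_phiV : Function.Surjective phiV := by
  have h1 : phiV ⟨v, vMv⟩ = 1 := by
    rw [show phiV ⟨v, vMv⟩ = (((6:ℚ) * v 1).num : ZMod 6) from rfl, vval_1]
    norm_num
  intro c
  refine ⟨(c.val : ℤ) • ⟨v, vMv⟩, ?_⟩
  rw [map_zsmul, h1, zsmul_eq_mul, mul_one]
  simp [ZMod.intCast_cast, ZMod.natCast_val]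

private lemma relindex_Mu : IntLat.relIndex Mu = 2 := by
  have h : IntLat.relIndex Mu = (IntLat.addSubgroupOf Mu).index := rfl
  rw [h, ← ker_phiU, AddSubgroup.index_eq_card,
    Nat.card_congr (QuotientAddGroup.quotientKerEquivOfSurjective phiU surj_phiU).toEquiv,
    Nat.card_zmod]

private lemma relindex_Mv : IntLat.relIndex Mv = 6 := by
  have h : IntLat.relIndex Mv = (IntLat.addSubgroupOf Mv).index := rfl
  rw [h, ← ker_phiV, AddSubgroup.index_eq_card,
    Nat.card_congr (QuotientAddGroup.quotientKerEquivOfSurjective phiV surj_phiV).toEquiv,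
    Nat.card_zmod]

private lemma s3_dualMu : s3 ∈ dualLat Mu := by
  intro y hy
  obtain ⟨w, hw, n, rfl⟩ := mem_Mu.mp hy
  obtain ⟨b, hb⟩ := hw 17
  refine ⟨-6 * b - 51 * n, ?_⟩
  rw [form_s3', Pi.add_apply, smul_apply', uval_17, hb]
  push_cast; ring

private lemma s3_not_Mu : s3 ∉ Mu := by
  intro h
  obtain ⟨w, hw, n, he⟩ := mem_Mu.mp h
  obtain ⟨a, ha⟩ := hw 1
  have e1 : s3 1 = w 1 + (n:ℚ) * (1/2) := by rw [he, Pi.add_apply, smul_apply', uval_1]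
  rw [sval_1, ha] at e1
  have e2 : (2:ℤ) = 6 * a + 3 * n := by
    exact_mod_cast (show (2:ℚ) = 6 * a + 3 * n by push_cast; linarith)
  omega

set_option maxHeartbeats 4000000 in
private lemma dualMv_key : ∀ x ∈ dualLat Mv, ((2:ℤ) • x ∈ Mv) ∧ (∀ i, ∃ k : ℤ, 36 * x i = (k:ℚ)) := by
  intro x hx
  have hIL : ∀ k : Fin 20, Pi.single k (1:ℚ) ∈ Mv := fun k => AddSubgroup.mem_sup_left (single_mem k)
  obtain ⟨a, ha⟩ := hx _ (hIL 0); rw [col0] at ha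
  obtain ⟨m1, hm1⟩ := hx _ (hIL 1); rw [col1] at hm1
  obtain ⟨m2, hm2⟩ := hx _ (hIL 2); rw [col2] at hm2
  obtain ⟨m3, hm3⟩ := hx _ (hIL 3); rw [col3] at hm3
  obtain ⟨m4, hm4⟩ := hx _ (hIL 4); rw [col4] at hm4
  obtain ⟨m5, hm5⟩ := hx _ (hIL 5); rw [col5] at hm5
  obtain ⟨m6, hm6⟩ := hx _ (hIL 6); rw [col6] at hm6
  obtain ⟨m7, hm7⟩ := hx _ (hIL 7); rw [col7] at hm7
  obtain ⟨m8, hm8⟩ := hx _ (hIL 8); rw [col8] at hm8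
  obtain ⟨m9, hm9⟩ := hx _ (hIL 9); rw [col9] at hm9
  obtain ⟨m10, hm10⟩ := hx _ (hIL 10); rw [col10] at hm10
  obtain ⟨m11, hm11⟩ := hx _ (hIL 11); rw [col11] at hm11
  obtain ⟨m12, hm12⟩ := hx _ (hIL 12); rw [col12] at hm12
  obtain ⟨m13, hm13⟩ := hx _ (hIL 13); rw [col13] at hm13
  obtain ⟨m14, hm14⟩ := hx _ (hIL 14); rw [col14] at hm14
  obtain ⟨m15, hm15⟩ := hx _ (hIL 15); rw [col15] at hm15
  obtain ⟨m16, hm16⟩ := hx _ (hIL 16); rw [col16] at hm16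
  obtain ⟨m17, hm17⟩ := hx _ (hIL 17); rw [col17] at hm17
  obtain ⟨m18, hm18⟩ := hx _ (hIL 18); rw [col18] at hm18
  obtain ⟨m19, hm19⟩ := hx _ (hIL 19); rw [col19] at hm19
  obtain ⟨c, hc⟩ := hx v vMv; rw [form_right_v] at hc
  obtain ⟨d2, hd2⟩ : ∃ d : ℤ, x 2 - 2 * x 1 = (d : ℚ) := ⟨m1, by push_cast; linarith⟩
  obtain ⟨d3, hd3⟩ : ∃ d : ℤ, x 3 - 3 * x 1 = (d : ℚ) := ⟨m2 + 2 * d2, by push_cast; linarith⟩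
  obtain ⟨d4, hd4⟩ : ∃ d : ℤ, x 4 - 4 * x 1 = (d : ℚ) := ⟨m3 + 2 * d3 - d2, by push_cast; linarith⟩
  obtain ⟨d5, hd5⟩ : ∃ d : ℤ, x 5 - 5 * x 1 = (d : ℚ) := ⟨m4 + 2 * d4 - d3, by push_cast; linarith⟩
  obtain ⟨d6, hd6⟩ : ∃ d : ℤ, x 6 - 6 * x 1 = (d : ℚ) := ⟨m5 + 2 * d5 - d4, by push_cast; linarith⟩
  obtain ⟨d7, hd7⟩ : ∃ d : ℤ, x 7 - 7 * x 1 = (d : ℚ) := ⟨m6 + 2 * d6 - d5, by push_cast; linarith⟩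
  obtain ⟨d8, hd8⟩ : ∃ d : ℤ, x 8 - 8 * x 1 = (d : ℚ) := ⟨m7 + 2 * d7 - d6, by push_cast; linarith⟩
  obtain ⟨d9, hd9⟩ : ∃ d : ℤ, x 9 - 9 * x 1 = (d : ℚ) := ⟨m8 + 2 * d8 - d7, by push_cast; linarith⟩
  obtain ⟨d10, hd10⟩ : ∃ d : ℤ, x 10 - 10 * x 1 = (d : ℚ) := ⟨m9 + 2 * d9 - d8, by push_cast; linarith⟩
  obtain ⟨d11, hd11⟩ : ∃ d : ℤ, x 11 - 11 * x 1 = (d : ℚ) := ⟨m10 + 2 * d10 - d9, by push_cast; linarith⟩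
  obtain ⟨d12, hd12⟩ : ∃ d : ℤ, x 12 - 12 * x 1 = (d : ℚ) := ⟨m11 + 2 * d11 - d10, by push_cast; linarith⟩
  obtain ⟨d13, hd13⟩ : ∃ d : ℤ, x 13 - 13 * x 1 = (d : ℚ) := ⟨m12 + 2 * d12 - d11, by push_cast; linarith⟩
  obtain ⟨d14, hd14⟩ : ∃ d : ℤ, x 14 - 14 * x 1 = (d : ℚ) := ⟨m13 + 2 * d13 - d12, by push_cast; linarith⟩
  obtain ⟨d15, hd15⟩ : ∃ d : ℤ, x 15 - 15 * x 1 = (d : ℚ) := ⟨m14 + 2 * d14 - d13, by push_cast; linarith⟩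
  obtain ⟨d16, hd16⟩ : ∃ d : ℤ, x 16 - 16 * x 1 = (d : ℚ) := ⟨m15 + 2 * d15 - d14, by push_cast; linarith⟩
  obtain ⟨d17, hd17⟩ : ∃ d : ℤ, x 17 - 17 * x 1 = (d : ℚ) := ⟨m16 + 2 * d16 - d15, by push_cast; linarith⟩
  obtain ⟨T, hT⟩ : ∃ T : ℤ, -18 * x 1 = (T : ℚ) := ⟨m17 - d16 + 2 * d17, by push_cast; linarith⟩
  have hZ : 3 * a + 17 * T = 6 * c + 18 * d17 := by
    exact_mod_cast (show (3 * (a:ℚ) + 17 * T = 6 * c + 18 * d17) by push_cast; linarith)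
  obtain ⟨Q, hQ⟩ : ∃ Q : ℤ, T = 3 * Q := ⟨6 * T - 2 * c - 6 * d17 + a, by omega⟩
  have hQc : (T : ℚ) = 3 * Q := by exact_mod_cast hQ
  constructor
  · have hsplit : (2:ℤ) • x = (fun i => 2 * x i + (2 * Q : ℚ) * v i) + (-2 * Q : ℤ) • v := by
      funext i
      rw [Pi.add_apply, smul_apply', smul_apply']
      push_cast; ring
    rw [hsplit]
    refine AddSubgroup.mem_sup.mpr ⟨_, ?_, _,
      AddSubgroup.mem_zmultiples_iff.mpr ⟨-2 * Q, rfl⟩, rfl⟩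
    intro i
    fin_cases i <;> simp only [fmk_0, fmk_1, fmk_2, fmk_3, fmk_4, fmk_5, fmk_6, fmk_7, fmk_8, fmk_9, fmk_10, fmk_11, fmk_12, fmk_13, fmk_14, fmk_15, fmk_16, fmk_17, fmk_18, fmk_19]
    · exact ⟨a + Q, by rw [vval_0]; push_cast; linarith⟩
    · exact ⟨0, by rw [vval_1]; push_cast; linarith⟩
    · exact ⟨2 * d2, by rw [vval_2]; push_cast; linarith⟩
    · exact ⟨2 * d3, by rw [vval_3]; push_cast; linarith⟩
    · exact ⟨2 * d4, by rw [vval_4]; push_cast; linarith⟩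
    · exact ⟨2 * d5, by rw [vval_5]; push_cast; linarith⟩
    · exact ⟨2 * d6, by rw [vval_6]; push_cast; linarith⟩
    · exact ⟨2 * d7, by rw [vval_7]; push_cast; linarith⟩
    · exact ⟨2 * d8, by rw [vval_8]; push_cast; linarith⟩
    · exact ⟨2 * d9, by rw [vval_9]; push_cast; linarith⟩
    · exact ⟨2 * d10, by rw [vval_10]; push_cast; linarith⟩
    · exact ⟨2 * d11, by rw [vval_11]; push_cast; linarith⟩
    · exact ⟨2 * d12, by rw [vval_12]; push_cast; linarith⟩
    · exact ⟨2 * d13, by rw [vval_13]; push_cast; linarith⟩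
    · exact ⟨2 * d14, by rw [vval_14]; push_cast; linarith⟩
    · exact ⟨2 * d15, by rw [vval_15]; push_cast; linarith⟩
    · exact ⟨2 * d16, by rw [vval_16]; push_cast; linarith⟩
    · exact ⟨2 * d17, by rw [vval_17]; push_cast; linarith⟩
    · exact ⟨-m18, by rw [vval_18]; push_cast; linarith⟩
    · exact ⟨-m19, by rw [vval_19]; push_cast; linarith⟩
  · intro i
    fin_cases i <;> simp only [fmk_0, fmk_1, fmk_2, fmk_3, fmk_4, fmk_5, fmk_6, fmk_7, fmk_8, fmk_9, fmk_10, fmk_11, fmk_12, fmk_13, fmk_14, fmk_15, fmk_16, fmk_17, fmk_18, fmk_19]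
    · exact ⟨18 * a, by push_cast; linarith⟩
    · exact ⟨-2 * T, by push_cast; linarith⟩
    · exact ⟨36 * d2 - 2 * 2 * T, by push_cast; linarith⟩
    · exact ⟨36 * d3 - 2 * 3 * T, by push_cast; linarith⟩
    · exact ⟨36 * d4 - 2 * 4 * T, by push_cast; linarith⟩
    · exact ⟨36 * d5 - 2 * 5 * T, by push_cast; linarith⟩
    · exact ⟨36 * d6 - 2 * 6 * T, by push_cast; linarith⟩
    · exact ⟨36 * d7 - 2 * 7 * T, by push_cast; linarith⟩
    · exact ⟨36 * d8 - 2 * 8 * T, by push_cast; linarith⟩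
    · exact ⟨36 * d9 - 2 * 9 * T, by push_cast; linarith⟩
    · exact ⟨36 * d10 - 2 * 10 * T, by push_cast; linarith⟩
    · exact ⟨36 * d11 - 2 * 11 * T, by push_cast; linarith⟩
    · exact ⟨36 * d12 - 2 * 12 * T, by push_cast; linarith⟩
    · exact ⟨36 * d13 - 2 * 13 * T, by push_cast; linarith⟩
    · exact ⟨36 * d14 - 2 * 14 * T, by push_cast; linarith⟩
    · exact ⟨36 * d15 - 2 * 15 * T, by push_cast; linarith⟩
    · exact ⟨36 * d16 - 2 * 16 * T, by push_cast; linarith⟩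
    · exact ⟨36 * d17 - 2 * 17 * T, by push_cast; linarith⟩
    · exact ⟨-18 * m18, by push_cast; linarith⟩
    · exact ⟨-18 * m19, by push_cast; linarith⟩


noncomputable def fV : (dualLat Mv) →+ (Fin 20 → ZMod 36) where
  toFun x := fun i => (((36:ℚ) * x.1 i).num : ZMod 36)
  map_zero' := by funext i; norm_num
  map_add' x y := by
    funext i
    obtain ⟨p, hp⟩ := (dualMv_key x.1 x.2).2 i
    obtain ⟨q, hq⟩ := (dualMv_key y.1 y.2).2 i
    have hpq : (36:ℚ) * (x + y).1 i = ((p + q : ℤ) : ℚ) := by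
      have e : (x + y).1 i = x.1 i + y.1 i := rfl
      rw [e]; push_cast; linarith
    show ((36 * (x + y).1 i).num : ZMod 36) = ((36 * x.1 i).num : ZMod 36) + ((36 * y.1 i).num : ZMod 36)
    rw [hpq, hp, hq, Rat.num_intCast, Rat.num_intCast, Rat.num_intCast]
    push_cast; ring

private lemma ker_fV : fV.ker = IntLat.addSubgroupOf (dualLat Mv) := by
  ext x
  rw [AddMonoidHom.mem_ker, AddSubgroup.mem_addSubgroupOf]
  constructor
  · intro h i
    obtain ⟨p, hp⟩ := (dualMv_key x.1 x.2).2 i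
    have hpi : (((36:ℚ) * x.1 i).num : ZMod 36) = 0 := congrFun h i
    rw [hp, Rat.num_intCast] at hpi
    obtain ⟨m, hm⟩ := (ZMod.intCast_zmod_eq_zero_iff_dvd p 36).mp hpi
    refine ⟨m, ?_⟩
    rw [hm] at hp
    push_cast at hp ⊢
    linarith
  · intro h
    funext i
    obtain ⟨a, ha⟩ := h i
    have e : (36:ℚ) * x.1 i = ((36 * a : ℤ) : ℚ) := by rw [ha]; push_cast; ring
    show (((36:ℚ) * x.1 i).num : ZMod 36) = 0
    rw [e, Rat.num_intCast]
    exact (ZMod.intCast_zmod_eq_zero_iff_dvd _ 36).mpr ⟨a, rfl⟩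

private lemma finite_discMv : Finite (disc Mv) := by
  have hfin1 : Finite ((dualLat Mv) ⧸ IntLat.addSubgroupOf (dualLat Mv)) := by
    rw [← ker_fV]
    exact Finite.of_injective _ (QuotientAddGroup.kerLift_injective fV)
  have hle : IntLat.addSubgroupOf (dualLat Mv) ≤
      (Mv.addSubgroupOf (dualLat Mv)).comap (AddMonoidHom.id (dualLat Mv)) := by
    intro y hy
    rw [AddSubgroup.mem_comap]
    rw [AddSubgroup.mem_addSubgroupOf] at hy ⊢
    exact AddSubgroup.mem_sup_left hy
  have hsurj : Function.Surjective
      (QuotientAddGroup.map (IntLat.addSubgroupOf (dualLat Mv)) (Mv.addSubgroupOf (dualLat Mv))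
        (AddMonoidHom.id (dualLat Mv)) hle) := by
    intro q
    refine QuotientAddGroup.induction_on q fun z => ?_
    exact ⟨QuotientAddGroup.mk z, rfl⟩
  exact Finite.of_surjective _ hsurj

private lemma two_torsion_discMv (g : disc Mv) : (2:ℕ) • g = 0 := by
  refine QuotientAddGroup.induction_on g fun x => ?_
  rw [← QuotientAddGroup.mk_nsmul, QuotientAddGroup.eq_zero_iff, AddSubgroup.mem_addSubgroupOf]
  have h2 := (dualMv_key x.1 x.2).1
  have e : (((2:ℕ) • x : dualLat Mv) : Fin 20 → ℚ) = (2:ℤ) • (x.1) := by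
    rw [two_nsmul, two_zsmul]
    rfl
  rw [e]
  exact h2

private lemma not_three_dvd_card_discMv : ¬ (3 ∣ Nat.card (disc Mv)) := by
  intro h3
  haveI := finite_discMv
  haveI := Fintype.ofFinite (disc Mv)
  rw [Nat.card_eq_fintype_card] at h3
  haveI : Fact (Nat.Prime 3) := ⟨by norm_num⟩
  obtain ⟨g, hg⟩ := exists_prime_addOrderOf_dvd_card 3 h3
  have hdvd : addOrderOf g ∣ 2 := addOrderOf_dvd_of_nsmul_eq_zero (two_torsion_discMv g)
  rw [hg] at hdvd
  norm_num at hdvd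

private lemma three_dvd_card_discMu : 3 ∣ Nat.card (disc Mu) := by
  haveI : Fact (Nat.Prime 3) := ⟨by norm_num⟩
  set ξ : dualLat Mu := ⟨s3, s3_dualMu⟩ with hξ
  set g : disc Mu := QuotientAddGroup.mk ξ with hgdef
  have hg3 : (3:ℕ) • g = 0 := by
    rw [hgdef, ← QuotientAddGroup.mk_nsmul, QuotientAddGroup.eq_zero_iff,
      AddSubgroup.mem_addSubgroupOf]
    have hmem : (3:ℤ) • s3 ∈ IntLat := by
      intro i
      obtain ⟨k, hk⟩ := three_s3 i
      exact ⟨k, by rw [smul_apply']; push_cast; linarith⟩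
    have e : (((3:ℕ) • ξ : dualLat Mu) : Fin 20 → ℚ) = (3:ℤ) • s3 := by
      show (((3:ℕ) • ξ : dualLat Mu) : Fin 20 → ℚ) = _
      rw [show ((3:ℕ) • ξ : dualLat Mu) = ξ + ξ + ξ by abel]
      rw [show (3:ℤ) • s3 = s3 + s3 + s3 by abel]
      rfl
    rw [e]
    exact AddSubgroup.mem_sup_left hmem
  have hgne : g ≠ 0 := by
    intro h0
    rw [hgdef, QuotientAddGroup.eq_zero_iff, AddSubgroup.mem_addSubgroupOf] at h0
    exact s3_not_Mu h0
  have hord : addOrderOf g = 3 := addOrderOf_eq_prime hg3 hgne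
  rw [← hord]
  exact addOrderOf_dvd_natCard g

/-- u and v pair integrally with N and have even square, the
overlattices N + ℤu and N + ℤv have indices 2 and 6 over N respectively, and
consequently their discriminant groups have different orders. -/
theorem A17_2A1_Zariski_pair :
    (∀ w ∈ IntLat, ∃ k : ℤ, form u w = (k : ℚ)) ∧
    (∀ w ∈ IntLat, ∃ k : ℤ, form v w = (k : ℚ)) ∧
    (∃ k : ℤ, form u u = 2 * (k : ℚ)) ∧
    (∃ k : ℤ, form v v = 2 * (k : ℚ)) ∧
    IntLat.relIndex Mu = 2 ∧
    IntLat.relIndex Mv = 6 ∧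
    Nat.card (disc Mu) ≠ Nat.card (disc Mv) := by
  refine ⟨?_, ?_, ?_, ?_, relindex_Mu, relindex_Mv, ?_⟩
  · intro w hw
    obtain ⟨a, ha⟩ := hw 0
    obtain ⟨b, hb⟩ := hw 17
    exact ⟨a - 9 * b, by rw [form_u', ha, hb]; push_cast; ring⟩
  · intro w hw
    obtain ⟨a, ha⟩ := hw 0
    obtain ⟨b, hb⟩ := hw 17
    exact ⟨a - 3 * b, by rw [form_v', ha, hb]; push_cast; ring⟩
  · exact ⟨-38, by rw [form_u', uval_0, uval_17]; norm_num⟩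
  · exact ⟨-4, by rw [form_v', vval_0, vval_17]; norm_num⟩
  · intro heq
    have h3 := three_dvd_card_discMu
    rw [heq] at h3
    exact not_three_dvd_card_discMv h3
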